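/- arXiv:0711.4151 — 4 statements merged into one kernel-verified Lean document; each statement's English description precedes it below -/
import Mathlib

section
/- If m ≥ 1, n ≥ 1 and mn is even, then the dimension of the perfect matching polytope P(m,n) of the grid graph G(m,n) equals (m−1)(n−1). -/
open Finset Pointwise

/-- The perfect matching polytope of a graph `G`: the convex hull in `ℝ^{Sym2 V}`
of the 0/1 incidence vectors of the perfect matchings of `G`. -/
noncomputable def pmPolytope {V : Type*} (G : SimpleGraph V) : Set (Sym2 V → ℝ) :=
  convexHull ℝ
    {x | ∃ M : G.Subgraph, M.IsPerfectMatching ∧ x = Set.indicator M.edgeSet 1}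

/-- The number of lattice points in the dilate `t • P`. -/
noncomputable def latticeCount {ι : Type*} (P : Set (ι → ℝ)) (t : ℕ) : ℕ :=
  Nat.card {x : ι → ℤ // (fun i => (x i : ℝ)) ∈ (t : ℝ) • P}

/-- The number of lattice points in the relative interior of the dilate `t • P`. -/
noncomputable def interiorLatticeCount {ι : Type*} (P : Set (ι → ℝ)) (t : ℕ) : ℕ :=
  Nat.card {x : ι → ℤ // (fun i => (x i : ℝ)) ∈ intrinsicInterior ℝ ((t : ℝ) • P)}

/-- A polytope `P` is Gorenstein of index `k` if `L_{P°}(t) = 0` for `0 < t < k`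
and `L_{P°}(t) = L_P(t - k)` for all `t ≥ k`. -/
def IsGorensteinOfIndex {ι : Type*} (P : Set (ι → ℝ)) (k : ℕ) : Prop :=
  (∀ t : ℕ, 0 < t → t < k → interiorLatticeCount P t = 0) ∧
  ∀ t : ℕ, k ≤ t → interiorLatticeCount P t = latticeCount P (t - k)

/-- The `m × n` grid graph: vertices `(i, j)` with `0 ≤ i < n`, `0 ≤ j < m`,
adjacent iff `|i - i'| + |j - j'| = 1`. -/
def gridGraph (m n : ℕ) : SimpleGraph (Fin n × Fin m) where
  Adj p q := Nat.dist p.1.val q.1.val + Nat.dist p.2.val q.2.val = 1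
  symm := by
    constructor
    intro p q h
    simpa [Nat.dist_comm] using h
  loopless := by
    constructor
    intro p h
    simp [Nat.dist_self] at h

/-- The `m × n` torus graph: the grid graph together with the wrap-around edges
`{(0,j),(n-1,j)}` and `{(i,0),(i,m-1)}`. -/
def torusGraph (m n : ℕ) : SimpleGraph (Fin n × Fin m) where
  Adj p q := p ≠ q ∧
    (Nat.dist p.1.val q.1.val + Nat.dist p.2.val q.2.val = 1 ∨
     (p.2 = q.2 ∧ ((p.1.val = 0 ∧ q.1.val = n - 1) ∨ (p.1.val = n - 1 ∧ q.1.val = 0))) ∨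
     (p.1 = q.1 ∧ ((p.2.val = 0 ∧ q.2.val = m - 1) ∨ (p.2.val = m - 1 ∧ q.2.val = 0))))
  symm := by
    constructor
    rintro p q ⟨hne, h⟩
    refine ⟨hne.symm, ?_⟩
    rcases h with h | ⟨h1, h2⟩ | ⟨h1, h2⟩
    · exact Or.inl (by simpa [Nat.dist_comm] using h)
    · exact Or.inr (Or.inl ⟨h1.symm, by tauto⟩)
    · exact Or.inr (Or.inr ⟨h1.symm, by tauto⟩)
  loopless := ⟨fun p h => h.1 rfl⟩

/-- A magic labelling of sum `t` of a graph `G`: a nonnegative integer label on each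
edge (zero on non-edges) such that at every vertex the incident labels sum to `t`. -/
def IsMagicLabelling {V : Type*} [Fintype V] [DecidableEq V]
    (G : SimpleGraph V) (x : Sym2 V → ℕ) (t : ℕ) : Prop :=
  (∀ e, e ∉ G.edgeSet → x e = 0) ∧
  ∀ v : V, ∑ e ∈ Finset.univ.filter (fun e : Sym2 V => v ∈ e), x e = t

/-- `T m n t` is the number of magic labellings of sum `t` of the grid graph `G(m,n)`. -/
noncomputable def T (m n t : ℕ) : ℕ :=
  Nat.card {x : Sym2 (Fin n × Fin m) → ℕ // IsMagicLabelling (gridGraph m n) x t}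

/-- The dimension of a polytope: the dimension of its affine hull. -/
noncomputable def polytopeDim {ι : Type*} (P : Set (ι → ℝ)) : ℕ :=
  Module.finrank ℝ (vectorSpan ℝ P)

/-- `(h 0, …, h k)` is the Ehrhart h-vector of a `d`-dimensional integral polytope `P`:
`∑_{t ≥ 0} L_P(t) z^t = (h_0 + h_1 z + ⋯ + h_k z^k)/(1 - z)^{d+1}` with `h k ≠ 0`,
expressed coefficientwise via `1/(1-z)^{d+1} = ∑_t C(t+d, d) z^t`. -/
def IsEhrhartHVector {ι : Type*} (P : Set (ι → ℝ)) (d : ℕ) (h : ℕ → ℤ) (k : ℕ) : Prop :=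
  h k ≠ 0 ∧ (∀ j, k < j → h j = 0) ∧
  ∀ t : ℕ, (latticeCount P t : ℤ) =
    ∑ j ∈ Finset.range (k + 1), h j * ((t + d - j).choose d : ℤ)

/-- A finite sequence `h 0, …, h k` is unimodal. -/
def UnimodalVec (h : ℕ → ℤ) (k : ℕ) : Prop :=
  ∃ j, j ≤ k ∧ (∀ i, i < j → h i ≤ h (i + 1)) ∧ (∀ i, j ≤ i → i < k → h (i + 1) ≤ h i)

namespace PM

/-- matching from an involution -/
def matchSub {VV : Type*} (G : SimpleGraph VV) (f : VV → VV)
    (hf : Function.Involutive f) (ha : ∀ v, G.Adj v (f v)) : G.Subgraph where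
  verts := Set.univ
  Adj v w := f v = w
  adj_sub := fun {v w} h => h ▸ ha v
  edge_vert := fun _ => Set.mem_univ _
  symm := ⟨fun v w h => by subst h; exact hf v⟩

lemma matchSub_isPM {VV : Type*} (G : SimpleGraph VV) (f : VV → VV)
    (hf : Function.Involutive f) (ha : ∀ v, G.Adj v (f v)) :
    (matchSub G f hf ha).IsPerfectMatching := by
  rw [SimpleGraph.Subgraph.isPerfectMatching_iff]
  exact fun v => ⟨f v, rfl, fun w (h : f v = w) => h.symm⟩

lemma matchSub_ind {VV : Type*} [DecidableEq VV] (G : SimpleGraph VV) (f : VV → VV)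
    (hf : Function.Involutive f) (ha : ∀ v, G.Adj v (f v)) (v w : VV) :
    Set.indicator (matchSub G f hf ha).edgeSet (1 : Sym2 VV → ℝ) s(v, w)
      = if f v = w then 1 else 0 := by
  classical
  rw [Set.indicator_apply]
  simp only [SimpleGraph.Subgraph.mem_edgeSet, Pi.one_apply]
  congr 1



variable {m n : ℕ}

abbrev V (m n : ℕ) := Fin n × Fin m

def hedge (m n : ℕ) (a b : ℕ) (h : a + 1 < n) (hb : b < m) : Sym2 (V m n) :=
  s(((⟨a, by omega⟩ : Fin n), (⟨b, hb⟩ : Fin m)), ((⟨a+1, h⟩ : Fin n), (⟨b, hb⟩ : Fin m)))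

def vedge (m n : ℕ) (a b : ℕ) (ha : a < n) (h : b + 1 < m) : Sym2 (V m n) :=
  s(((⟨a, ha⟩ : Fin n), (⟨b, by omega⟩ : Fin m)), ((⟨a, ha⟩ : Fin n), (⟨b+1, h⟩ : Fin m)))

noncomputable def q (m n : ℕ) (i j : ℕ) (hi : i + 1 < n) (hj : j + 1 < m) :
    Sym2 (V m n) → ℝ := fun e =>
  (if e = hedge m n i j hi (by omega) then 1 else 0)
  + (if e = hedge m n i (j+1) hi hj then 1 else 0)
  - (if e = vedge m n i j (by omega) hj then 1 else 0)
  - (if e = vedge m n (i+1) j hi hj then 1 else 0)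

noncomputable def qt (m n i j : ℕ) : Sym2 (V m n) → ℝ :=
  if h : i + 1 < n ∧ j + 1 < m then q m n i j h.1 h.2 else 0

lemma qt_eq (i j : ℕ) (hi : i + 1 < n) (hj : j + 1 < m) :
    qt m n i j = q m n i j hi hj := dif_pos ⟨hi, hj⟩

lemma q_vedge (i j a b : ℕ) (hi : i+1 < n) (hj : j+1 < m) (ha : a < n) (hb : b+1 < m) :
    q m n i j hi hj (vedge m n a b ha hb)
      = if j = b ∧ (i = a ∨ i + 1 = a) then -1 else 0 := by
  simp only [q, hedge, vedge, Sym2.eq_iff, Prod.mk.injEq, Fin.mk.injEq]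
  rw [if_neg (by omega : ¬((a = i ∧ b = j) ∧ a = i + 1 ∧ b + 1 = j ∨ (a = i + 1 ∧ b = j) ∧ a = i ∧ b + 1 = j))]
  rw [if_neg (by omega : ¬((a = i ∧ b = j + 1) ∧ a = i + 1 ∧ b + 1 = j + 1 ∨ (a = i + 1 ∧ b = j + 1) ∧ a = i ∧ b + 1 = j + 1))]
  rw [if_congr (by omega : ((a = i ∧ b = j) ∧ a = i ∧ b + 1 = j + 1 ∨ (a = i ∧ b = j + 1) ∧ a = i ∧ b + 1 = j) ↔ (a = i ∧ b = j)) rfl rfl]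
  rw [if_congr (by omega : ((a = i + 1 ∧ b = j) ∧ a = i + 1 ∧ b + 1 = j + 1 ∨ (a = i + 1 ∧ b = j + 1) ∧ a = i + 1 ∧ b + 1 = j) ↔ (a = i + 1 ∧ b = j)) rfl rfl]
  split_ifs <;> first | omega | norm_num


noncomputable def pmPolytope' {VV : Type*} (G : SimpleGraph VV) : Set (Sym2 VV → ℝ) :=
  convexHull ℝ
    {x | ∃ M : G.Subgraph, M.IsPerfectMatching ∧ x = Set.indicator M.edgeSet 1}

def pmSet {VV : Type*} (G : SimpleGraph VV) : Set (Sym2 VV → ℝ) :=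
  {x | ∃ M : G.Subgraph, M.IsPerfectMatching ∧ x = Set.indicator M.edgeSet 1}

/-- the constraint subspace -/
def KSub {VV : Type*} [Fintype VV] [DecidableEq VV] (G : SimpleGraph VV) :
    Submodule ℝ (Sym2 VV → ℝ) where
  carrier := {x | (∀ e, e ∉ G.edgeSet → x e = 0) ∧ ∀ v, ∑ w : VV, x s(v, w) = 0}
  add_mem' := by
    rintro x y ⟨hx1, hx2⟩ ⟨hy1, hy2⟩
    refine ⟨fun e he => ?_, fun v => ?_⟩
    · simp [Pi.add_apply, hx1 e he, hy1 e he]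
    · simp [Pi.add_apply, Finset.sum_add_distrib, hx2 v, hy2 v]
  zero_mem' := ⟨fun e _ => rfl, fun v => by simp⟩
  smul_mem' := by
    rintro c x ⟨hx1, hx2⟩
    refine ⟨fun e he => ?_, fun v => ?_⟩
    · simp [hx1 e he]
    · simp [← Finset.mul_sum, hx2 v]

lemma pm_offedge {VV : Type*} (G : SimpleGraph VV) (M : G.Subgraph)
    (e : Sym2 VV) (he : e ∉ G.edgeSet) :
    Set.indicator M.edgeSet (1 : Sym2 VV → ℝ) e = 0 :=
  Set.indicator_of_notMem (fun hm => he (M.edgeSet_subset hm)) _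

lemma pm_vsum {VV : Type*} [Fintype VV] [DecidableEq VV] (G : SimpleGraph VV)
    (M : G.Subgraph) (h : M.IsPerfectMatching) (v : VV) :
    ∑ w : VV, Set.indicator M.edgeSet (1 : Sym2 VV → ℝ) s(v, w) = 1 := by
  classical
  obtain ⟨w0, hw0, huniq⟩ := (SimpleGraph.Subgraph.isPerfectMatching_iff.mp h) v
  rw [Finset.sum_eq_single w0]
  · rw [Set.indicator_apply, if_pos (SimpleGraph.Subgraph.mem_edgeSet.mpr hw0)]; rfl
  · intro w _ hne
    rw [Set.indicator_apply, if_neg]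
    rw [SimpleGraph.Subgraph.mem_edgeSet]
    exact fun hadj => hne (huniq w hadj)
  · intro hv; exact absurd (Finset.mem_univ w0) hv

lemma vspan_le_K {VV : Type*} [Fintype VV] [DecidableEq VV] (G : SimpleGraph VV) :
    vectorSpan ℝ (pmSet G) ≤ KSub G := by
  rw [vectorSpan_def, Submodule.span_le]
  rintro z hz
  rw [Set.mem_vsub] at hz
  obtain ⟨x, hx, y, hy, rfl⟩ := hz
  obtain ⟨M, hM, rfl⟩ := hx
  obtain ⟨N, hN, rfl⟩ := hy
  constructor
  · intro e he
    have : (Set.indicator M.edgeSet (1 : Sym2 VV → ℝ) -ᵥ Set.indicator N.edgeSet 1) e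
        = Set.indicator M.edgeSet (1 : Sym2 VV → ℝ) e - Set.indicator N.edgeSet 1 e := rfl
    rw [this, pm_offedge G M e he, pm_offedge G N e he, sub_zero]
  · intro v
    have : ∀ w : VV, (Set.indicator M.edgeSet (1 : Sym2 VV → ℝ) -ᵥ Set.indicator N.edgeSet 1) s(v, w)
        = Set.indicator M.edgeSet (1 : Sym2 VV → ℝ) s(v, w) - Set.indicator N.edgeSet 1 s(v, w) :=
      fun w => rfl
    simp only [this, Finset.sum_sub_distrib, pm_vsum G M hM v, pm_vsum G N hN v, sub_self]


lemma sum_qt_vedge (c : ℕ → ℕ → ℝ) {a b : ℕ} (ha : a < n) (hb : b + 1 < m) :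
    ∑ i ∈ Finset.range (n-1), ∑ j ∈ Finset.range (m-1),
        c i j * qt m n i j (vedge m n a b ha hb)
      = -(if a < n-1 then c a b else 0) - (if 0 < a then c (a-1) b else 0) := by
  have hsum : ∀ i ∈ Finset.range (n-1),
      ∑ j ∈ Finset.range (m-1), c i j * qt m n i j (vedge m n a b ha hb)
        = (if i = a then -c a b else 0) + (if i = a - 1 then (if 0 < a then -c (a-1) b else 0) else 0) := by
    intro i hi
    rw [Finset.mem_range] at hi
    have hin : i + 1 < n := by omega
    have : ∀ j ∈ Finset.range (m-1), c i j * qt m n i j (vedge m n a b ha hb)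
        = if j = b then (if i = a ∨ i + 1 = a then -c i b else 0) else 0 := by
      intro j hj
      rw [Finset.mem_range] at hj
      have hjm : j + 1 < m := by omega
      rw [qt_eq i j hin hjm, q_vedge i j a b hin hjm ha hb]
      split_ifs <;> first | omega | (try rw [(by omega : j = b)]) <;> ring
    rw [Finset.sum_congr rfl this, Finset.sum_ite_eq' (Finset.range (m-1)) b]
    rw [if_pos (Finset.mem_range.mpr (by omega))]
    split_ifs <;> first | omega | (try rw [(by omega : i = a)]) | skip
    all_goals first | omega | (try rw [(by omega : i = a - 1)]) | skip
    all_goals first | ring | omega | simp | skip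
    all_goals (try rw [(by omega : i = a)]) <;> first | ring | omega | simp
  rw [Finset.sum_congr rfl hsum, Finset.sum_add_distrib,
    Finset.sum_ite_eq' (Finset.range (n-1)) a, Finset.sum_ite_eq' (Finset.range (n-1)) (a-1)]
  simp only [Finset.mem_range]
  split_ifs <;> first | omega | ring | skip
  all_goals (first | (rw [(by omega : a - 1 = a)]; ring) | omega | ring | skip)


noncomputable def Qf (m n : ℕ) (p : Fin (n-1) × Fin (m-1)) : Sym2 (V m n) → ℝ :=
  qt m n p.1.val p.2.val

noncomputable def cOf (g : Fin (n-1) × Fin (m-1) → ℝ) : ℕ → ℕ → ℝ :=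
  fun i j => if h : i < n-1 ∧ j < m-1 then g (⟨i, h.1⟩, ⟨j, h.2⟩) else 0

lemma sum_Qf (g : Fin (n-1) × Fin (m-1) → ℝ) :
    ∑ p : Fin (n-1) × Fin (m-1), g p • Qf m n p
      = ∑ i ∈ Finset.range (n-1), ∑ j ∈ Finset.range (m-1),
          (cOf (m := m) (n := n) g) i j • qt m n i j := by
  rw [Fintype.sum_prod_type]
  rw [← Fin.sum_univ_eq_sum_range (fun i => ∑ j ∈ Finset.range (m-1),
      (cOf (m := m) (n := n) g) i j • qt m n i j) (n-1)]
  apply Finset.sum_congr rfl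
  intro i _
  rw [← Fin.sum_univ_eq_sum_range (fun j => (cOf (m := m) (n := n) g) i j • qt m n i j) (m-1)]
  apply Finset.sum_congr rfl
  intro j _
  simp only [cOf, Qf, dif_pos (And.intro i.isLt j.isLt)]

lemma Qf_linIndep : LinearIndependent ℝ (Qf m n) := by
  rw [Fintype.linearIndependent_iff]
  intro g hg
  set c : ℕ → ℕ → ℝ := cOf (m := m) (n := n) g with hc
  have H : ∀ a b (ha : a < n) (hb : b + 1 < m),
      (0:ℝ) = -(if a < n-1 then c a b else 0) - (if 0 < a then c (a-1) b else 0) := by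
    intro a b ha hb
    have := congrFun (sum_Qf (m := m) (n := n) g) (vedge m n a b ha hb)
    rw [hg] at this
    have h2 : ∀ i ∈ Finset.range (n-1), (∑ j ∈ Finset.range (m-1), c i j • qt m n i j)
        (vedge m n a b ha hb) = ∑ j ∈ Finset.range (m-1), c i j * qt m n i j (vedge m n a b ha hb) := by
      intro i _
      rw [Finset.sum_apply]
      rfl
    rw [Finset.sum_apply, Finset.sum_congr rfl h2, sum_qt_vedge c ha hb] at this
    simpa using this
  have key : ∀ a, a < n-1 → ∀ b, b < m-1 → c a b = 0 := by
    intro a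
    induction a with
    | zero =>
      intro ha b hb
      have := H 0 b (by omega) (by omega)
      rw [if_pos ha, if_neg (by omega)] at this
      linarith
    | succ a ih =>
      intro ha b hb
      have := H (a+1) b (by omega) (by omega)
      rw [if_pos ha, if_pos (by omega)] at this
      simp only [Nat.add_sub_cancel] at this
      have := ih (by omega) b hb
      linarith
  intro p
  have := key p.1.val p.1.isLt p.2.val p.2.isLt
  rwa [hc, cOf, dif_pos (And.intro p.1.isLt p.2.isLt)] at this


lemma vertexSum_single {VV : Type*} [Fintype VV] [DecidableEq VV] {G : SimpleGraph VV}
    (y : Sym2 VV → ℝ) (hy : y ∈ KSub G) (v w0 : VV)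
    (h : ∀ w : VV, w ≠ w0 → y s(v, w) = 0) : y s(v, w0) = 0 := by
  have h2 := hy.2 v
  rwa [Finset.sum_eq_single w0 (fun w _ hw => h w hw)
    (fun hv => absurd (Finset.mem_univ w0) hv)] at h2

lemma offedge_zero {VV : Type*} [Fintype VV] [DecidableEq VV] {G : SimpleGraph VV}
    (y : Sym2 VV → ℝ) (hy : y ∈ KSub G) (u w : VV) (h : ¬ G.Adj u w) : y s(u, w) = 0 :=
  hy.1 _ (fun hmem => h ((SimpleGraph.mem_edgeSet G).mp hmem))

lemma grid_adj_cases {u w : V m n} (h : (gridGraph m n).Adj u w) :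
    (u.1.val + 1 = w.1.val ∧ u.2.val = w.2.val) ∨ (w.1.val + 1 = u.1.val ∧ u.2.val = w.2.val)
    ∨ (u.1.val = w.1.val ∧ u.2.val + 1 = w.2.val) ∨ (u.1.val = w.1.val ∧ w.2.val + 1 = u.2.val) := by
  have h' : Nat.dist u.1.val w.1.val + Nat.dist u.2.val w.2.val = 1 := h
  simp only [Nat.dist] at h'
  omega

lemma grid_adj_cases' {a b : ℕ} (ha : a < n) (hb : b < m) {w : V m n}
    (h : (gridGraph m n).Adj ((⟨a, ha⟩ : Fin n), (⟨b, hb⟩ : Fin m)) w) :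
    (a + 1 = w.1.val ∧ b = w.2.val) ∨ (w.1.val + 1 = a ∧ b = w.2.val)
    ∨ (a = w.1.val ∧ b + 1 = w.2.val) ∨ (a = w.1.val ∧ w.2.val + 1 = b) :=
  grid_adj_cases h

/-- recursive coefficients -/
noncomputable def crec (xv : ℕ → ℕ → ℝ) : ℕ → ℕ → ℝ
  | 0 => fun b => -xv 0 b
  | (a+1) => fun b => -xv (a+1) b - crec xv a b

lemma K_le_span (hqK : ∀ i j (hi : i+1 < n) (hj : j+1 < m), q m n i j hi hj ∈ KSub (gridGraph m n)) :
    KSub (gridGraph m n) ≤ Submodule.span ℝ (Set.range (Qf m n)) := by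
  intro x hx
  set xv : ℕ → ℕ → ℝ := fun a b => if h : a < n ∧ b + 1 < m then x (vedge m n a b h.1 h.2) else 0 with hxv
  set c : ℕ → ℕ → ℝ := crec xv with hcdef
  set S : Sym2 (V m n) → ℝ := ∑ i ∈ Finset.range (n-1), ∑ j ∈ Finset.range (m-1), c i j • qt m n i j with hSdef
  have hS_span : S ∈ Submodule.span ℝ (Set.range (Qf m n)) := by
    apply Submodule.sum_mem
    intro i hi
    apply Submodule.sum_mem
    intro j hj
    rw [Finset.mem_range] at hi hj
    apply Submodule.smul_mem
    apply Submodule.subset_span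
    exact ⟨(⟨i, hi⟩, ⟨j, hj⟩), rfl⟩
  have hS_K : S ∈ KSub (gridGraph m n) := by
    apply Submodule.sum_mem
    intro i hi
    apply Submodule.sum_mem
    intro j hj
    rw [Finset.mem_range] at hi hj
    apply Submodule.smul_mem
    rw [qt_eq i j (by omega) (by omega)]
    exact hqK i j (by omega) (by omega)
  set y : Sym2 (V m n) → ℝ := x - S with hydef
  have hy : y ∈ KSub (gridGraph m n) := Submodule.sub_mem _ hx hS_K
  have hSv : ∀ a b (ha : a < n) (hb : b + 1 < m),
      S (vedge m n a b ha hb)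
        = -(if a < n-1 then c a b else 0) - (if 0 < a then c (a-1) b else 0) := by
    intro a b ha hb
    rw [hSdef, Finset.sum_apply]
    have h2 : ∀ i ∈ Finset.range (n-1), (∑ j ∈ Finset.range (m-1), c i j • qt m n i j)
        (vedge m n a b ha hb) = ∑ j ∈ Finset.range (m-1), c i j * qt m n i j (vedge m n a b ha hb) := by
      intro i _
      rw [Finset.sum_apply]
      rfl
    rw [Finset.sum_congr rfl h2, sum_qt_vedge c ha hb]
  have hyv : ∀ a b (ha : a < n) (hb : b + 1 < m), a < n - 1 →
      y (vedge m n a b ha hb) = 0 := by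
    intro a b ha hb ha2
    have hxveq : xv a b = x (vedge m n a b ha hb) := by
      simp only [hxv]
      rw [dif_pos (And.intro ha hb)]
    have hy' : y (vedge m n a b ha hb) = x (vedge m n a b ha hb) - S (vedge m n a b ha hb) := rfl
    rw [hy', hSv a b ha hb, if_pos ha2, ← hxveq]
    cases a with
    | zero =>
      have hc : c 0 b = -xv 0 b := rfl
      rw [hc, if_neg (by omega)]
      ring
    | succ i =>
      have hc : c (i+1) b = -xv (i+1) b - c i b := rfl
      rw [hc, if_pos (by omega)]
      simp only [Nat.add_sub_cancel]
      ring
  -- horizontals vanish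
  have hyh : ∀ a, ∀ b (h1 : a+1 < n) (h2 : b < m), y (hedge m n a b h1 h2) = 0 := by
    intro a
    induction a with
    | zero =>
      intro b h1 h2
      refine vertexSum_single y hy ((⟨0, by omega⟩ : Fin n), (⟨b, h2⟩ : Fin m))
        ((⟨1, h1⟩ : Fin n), (⟨b, h2⟩ : Fin m)) ?_
      intro w hw
      by_cases hadj : (gridGraph m n).Adj ((⟨0, by omega⟩ : Fin n), (⟨b, h2⟩ : Fin m)) w
      · rcases grid_adj_cases' _ _ hadj with ⟨c1, c2⟩ | ⟨c1, c2⟩ | ⟨c1, c2⟩ | ⟨c1, c2⟩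
        · exfalso
          exact hw (Prod.ext (Fin.ext (by simp; omega)) (Fin.ext (by simp; omega)))
        · exfalso; omega
        · have he : s(((⟨0, by omega⟩ : Fin n), (⟨b, h2⟩ : Fin m)), w)
              = vedge m n 0 b (by omega) (by have := w.2.isLt; omega) := by
            simp only [vedge, Sym2.eq_iff, Prod.ext_iff, Fin.ext_iff, Fin.val_mk, true_and, and_true]
            omega
          rw [he]; exact hyv 0 b _ _ (by omega)
        · have he : s(((⟨0, by omega⟩ : Fin n), (⟨b, h2⟩ : Fin m)), w)
              = vedge m n 0 (b-1) (by omega) (by omega) := by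
            simp only [vedge, Sym2.eq_iff, Prod.ext_iff, Fin.ext_iff, Fin.val_mk, true_and, and_true]
            omega
          rw [he]; exact hyv 0 (b-1) _ _ (by omega)
      · exact offedge_zero y hy _ _ hadj
    | succ a ih =>
      intro b h1 h2
      refine vertexSum_single y hy ((⟨a+1, by omega⟩ : Fin n), (⟨b, h2⟩ : Fin m))
        ((⟨a+2, h1⟩ : Fin n), (⟨b, h2⟩ : Fin m)) ?_
      intro w hw
      by_cases hadj : (gridGraph m n).Adj ((⟨a+1, by omega⟩ : Fin n), (⟨b, h2⟩ : Fin m)) w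
      · rcases grid_adj_cases' _ _ hadj with ⟨c1, c2⟩ | ⟨c1, c2⟩ | ⟨c1, c2⟩ | ⟨c1, c2⟩
        · exfalso
          exact hw (Prod.ext (Fin.ext (by simp; omega)) (Fin.ext (by simp; omega)))
        · have he : s(((⟨a+1, by omega⟩ : Fin n), (⟨b, h2⟩ : Fin m)), w)
              = hedge m n a b (by omega) h2 := by
            simp only [hedge, Sym2.eq_iff, Prod.ext_iff, Fin.ext_iff, Fin.val_mk, true_and, and_true]
            omega
          rw [he]; exact ih b (by omega) h2
        · have he : s(((⟨a+1, by omega⟩ : Fin n), (⟨b, h2⟩ : Fin m)), w)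
              = vedge m n (a+1) b (by omega) (by have := w.2.isLt; omega) := by
            simp only [vedge, Sym2.eq_iff, Prod.ext_iff, Fin.ext_iff, Fin.val_mk, true_and, and_true]
            omega
          rw [he]; exact hyv (a+1) b _ _ (by omega)
        · have he : s(((⟨a+1, by omega⟩ : Fin n), (⟨b, h2⟩ : Fin m)), w)
              = vedge m n (a+1) (b-1) (by omega) (by omega) := by
            simp only [vedge, Sym2.eq_iff, Prod.ext_iff, Fin.ext_iff, Fin.val_mk, true_and, and_true]
            omega
          rw [he]; exact hyv (a+1) (b-1) _ _ (by omega)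
      · exact offedge_zero y hy _ _ hadj
  -- last column verticals vanish
  have hyl : ∀ b (h2 : b+1 < m) (hn1 : n-1 < n), y (vedge m n (n-1) b hn1 h2) = 0 := by
    intro b
    induction b with
    | zero =>
      intro h2 hn1
      refine vertexSum_single y hy ((⟨n-1, hn1⟩ : Fin n), (⟨0, by omega⟩ : Fin m))
        ((⟨n-1, hn1⟩ : Fin n), (⟨1, h2⟩ : Fin m)) ?_
      intro w hw
      by_cases hadj : (gridGraph m n).Adj ((⟨n-1, hn1⟩ : Fin n), (⟨0, by omega⟩ : Fin m)) w
      · rcases grid_adj_cases' _ _ hadj with ⟨c1, c2⟩ | ⟨c1, c2⟩ | ⟨c1, c2⟩ | ⟨c1, c2⟩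
        · exfalso; have := w.1.isLt; omega
        · have he : s(((⟨n-1, hn1⟩ : Fin n), (⟨0, by omega⟩ : Fin m)), w)
              = hedge m n (n-1-1) 0 (by omega) (by omega) := by
            simp only [hedge, Sym2.eq_iff, Prod.ext_iff, Fin.ext_iff, Fin.val_mk, true_and, and_true]
            omega
          rw [he]; exact hyh (n-1-1) 0 _ _
        · exfalso
          exact hw (Prod.ext (Fin.ext (by simp; omega)) (Fin.ext (by simp; omega)))
        · exfalso; omega
      · exact offedge_zero y hy _ _ hadj
    | succ b ih =>
      intro h2 hn1
      refine vertexSum_single y hy ((⟨n-1, hn1⟩ : Fin n), (⟨b+1, by omega⟩ : Fin m))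
        ((⟨n-1, hn1⟩ : Fin n), (⟨b+2, h2⟩ : Fin m)) ?_
      intro w hw
      by_cases hadj : (gridGraph m n).Adj ((⟨n-1, hn1⟩ : Fin n), (⟨b+1, by omega⟩ : Fin m)) w
      · rcases grid_adj_cases' _ _ hadj with ⟨c1, c2⟩ | ⟨c1, c2⟩ | ⟨c1, c2⟩ | ⟨c1, c2⟩
        · exfalso; have := w.1.isLt; omega
        · have he : s(((⟨n-1, hn1⟩ : Fin n), (⟨b+1, by omega⟩ : Fin m)), w)
              = hedge m n (n-1-1) (b+1) (by omega) (by omega) := by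
            simp only [hedge, Sym2.eq_iff, Prod.ext_iff, Fin.ext_iff, Fin.val_mk, true_and, and_true]
            omega
          rw [he]; exact hyh (n-1-1) (b+1) _ _
        · exfalso
          exact hw (Prod.ext (Fin.ext (by simp; omega)) (Fin.ext (by simp; omega)))
        · have he : s(((⟨n-1, hn1⟩ : Fin n), (⟨b+1, by omega⟩ : Fin m)), w)
              = vedge m n (n-1) b hn1 (by omega) := by
            simp only [vedge, Sym2.eq_iff, Prod.ext_iff, Fin.ext_iff, Fin.val_mk, true_and, and_true]
            omega
          rw [he]; exact ih (by omega) hn1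
      · exact offedge_zero y hy _ _ hadj
  -- conclude y = 0
  have hy0 : y = 0 := by
    funext e
    induction e using Sym2.ind with
    | _ u w =>
    show y s(u, w) = 0
    by_cases hadj : (gridGraph m n).Adj u w
    · rcases grid_adj_cases hadj with ⟨c1, c2⟩ | ⟨c1, c2⟩ | ⟨c1, c2⟩ | ⟨c1, c2⟩
      · have he : s(u, w) = hedge m n u.1.val u.2.val (by have := w.1.isLt; omega) (u.2.isLt) := by
          simp only [hedge, Sym2.eq_iff, Prod.ext_iff, Fin.ext_iff, Fin.val_mk, true_and, and_true]
          omega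
        rw [he]; exact hyh _ _ _ _
      · have he : s(u, w) = hedge m n w.1.val w.2.val (by have := u.1.isLt; omega) (w.2.isLt) := by
          simp only [hedge, Sym2.eq_iff, Prod.ext_iff, Fin.ext_iff, Fin.val_mk, true_and, and_true]
          omega
        rw [he]; exact hyh _ _ _ _
      · have hb : u.2.val + 1 < m := by have := w.2.isLt; omega
        by_cases hu1 : u.1.val < n - 1
        · have he : s(u, w) = vedge m n u.1.val u.2.val u.1.isLt hb := by
            simp only [vedge, Sym2.eq_iff, Prod.ext_iff, Fin.ext_iff, Fin.val_mk, true_and, and_true]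
            omega
          rw [he]; exact hyv _ _ _ _ hu1
        · have he : s(u, w) = vedge m n (n-1) u.2.val (by have := u.1.isLt; omega) hb := by
            simp only [vedge, Sym2.eq_iff, Prod.ext_iff, Fin.ext_iff, Fin.val_mk, true_and, and_true]
            have := u.1.isLt
            omega
          rw [he]; exact hyl _ _ _
      · have hb : w.2.val + 1 < m := by have := u.2.isLt; omega
        by_cases hu1 : u.1.val < n - 1
        · have he : s(u, w) = vedge m n u.1.val w.2.val u.1.isLt hb := by
            simp only [vedge, Sym2.eq_iff, Prod.ext_iff, Fin.ext_iff, Fin.val_mk, true_and, and_true]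
            omega
          rw [he]; exact hyv _ _ _ _ hu1
        · have he : s(u, w) = vedge m n (n-1) w.2.val (by have := u.1.isLt; omega) hb := by
            simp only [vedge, Sym2.eq_iff, Prod.ext_iff, Fin.ext_iff, Fin.val_mk, true_and, and_true]
            have := u.1.isLt
            omega
          rw [he]; exact hyl _ _ _
    · exact offedge_zero y hy _ _ hadj
  have hxS : x = S := by
    have h0 := sub_eq_zero.mp (hydef ▸ hy0)
    exact h0
  rw [hxS]
  exact hS_span


section MEven
variable (m n i j : ℕ)

def fM (hi : i + 1 < n) (hm2 : m % 2 = 0) : V m n → V m n := fun p =>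
  if h : p.1.val = i ∨ p.1.val = i + 1 then
    ((⟨i + (i+1) - p.1.val, by omega⟩ : Fin n), p.2)
  else
    (p.1, if h2 : p.2.val % 2 = 0 then (⟨p.2.val + 1, by have := p.2.isLt; omega⟩ : Fin m)
          else (⟨p.2.val - 1, by have := p.2.isLt; omega⟩ : Fin m))

def gM (hi : i + 1 < n) (hj : j + 1 < m) (hm2 : m % 2 = 0) : V m n → V m n := fun p =>
  if (p.1.val = i ∨ p.1.val = i + 1) ∧ (p.2.val = j ∨ p.2.val = j + 1) then
    (p.1, if p.2.val = j then (⟨j + 1, hj⟩ : Fin m) else (⟨j, by omega⟩ : Fin m))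
  else fM m n i hi hm2 p

variable {m n i j}

lemma fM_spec1 (hi : i + 1 < n) (hm2 : m % 2 = 0) (p : V m n)
    (h : p.1.val = i ∨ p.1.val = i + 1) :
    fM m n i hi hm2 p = ((⟨i + (i+1) - p.1.val, by omega⟩ : Fin n), p.2) := by
  simp only [fM]
  rw [dif_pos h]

lemma fM_spec2 (hi : i + 1 < n) (hm2 : m % 2 = 0) (p : V m n)
    (h : ¬ (p.1.val = i ∨ p.1.val = i + 1)) (h2 : p.2.val % 2 = 0) :
    fM m n i hi hm2 p = (p.1, (⟨p.2.val + 1, by have := p.2.isLt; omega⟩ : Fin m)) := by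
  simp only [fM]
  rw [dif_neg h, dif_pos h2]

lemma fM_spec3 (hi : i + 1 < n) (hm2 : m % 2 = 0) (p : V m n)
    (h : ¬ (p.1.val = i ∨ p.1.val = i + 1)) (h2 : ¬ p.2.val % 2 = 0) :
    fM m n i hi hm2 p = (p.1, (⟨p.2.val - 1, by have := p.2.isLt; omega⟩ : Fin m)) := by
  simp only [fM]
  rw [dif_neg h, dif_neg h2]

lemma fM_invol (hi : i + 1 < n) (hm2 : m % 2 = 0) : Function.Involutive (fM m n i hi hm2) := by
  intro p
  by_cases h : p.1.val = i ∨ p.1.val = i + 1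
  · rw [fM_spec1 hi hm2 p h,
      fM_spec1 hi hm2 _ (show (⟨i + (i+1) - p.1.val, by omega⟩ : Fin n).val = i
        ∨ (⟨i + (i+1) - p.1.val, by omega⟩ : Fin n).val = i + 1 by
          simp only [Fin.val_mk]; omega)]
    exact Prod.ext (Fin.ext (by simp only [Fin.val_mk]; omega)) rfl
  · by_cases h2 : p.2.val % 2 = 0
    · rw [fM_spec2 hi hm2 p h h2]
      have e2 := fM_spec3 hi hm2 (p.1, (⟨p.2.val + 1, by have := p.2.isLt; omega⟩ : Fin m)) h
        (show ¬ (p.2.val + 1) % 2 = 0 by omega)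
      rw [e2]
      exact Prod.ext rfl (Fin.ext (show p.2.val + 1 - 1 = p.2.val by omega))
    · rw [fM_spec3 hi hm2 p h h2]
      have e2 := fM_spec2 hi hm2 (p.1, (⟨p.2.val - 1, by have := p.2.isLt; omega⟩ : Fin m)) h
        (show (p.2.val - 1) % 2 = 0 by omega)
      rw [e2]
      exact Prod.ext rfl (Fin.ext (show p.2.val - 1 + 1 = p.2.val by omega))

lemma fM_adj (hi : i + 1 < n) (hm2 : m % 2 = 0) (p : V m n) :
    (gridGraph m n).Adj p (fM m n i hi hm2 p) := by
  by_cases h : p.1.val = i ∨ p.1.val = i + 1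
  · rw [fM_spec1 hi hm2 p h]
    show Nat.dist _ _ + Nat.dist _ _ = 1
    simp only [Fin.val_mk, Nat.dist]
    omega
  · by_cases h2 : p.2.val % 2 = 0
    · rw [fM_spec2 hi hm2 p h h2]
      show Nat.dist _ _ + Nat.dist _ _ = 1
      simp only [Fin.val_mk, Nat.dist]
      omega
    · rw [fM_spec3 hi hm2 p h h2]
      show Nat.dist _ _ + Nat.dist _ _ = 1
      simp only [Fin.val_mk, Nat.dist]
      omega

lemma gM_not_hole (hi : i + 1 < n) (hj : j + 1 < m) (hm2 : m % 2 = 0) (p : V m n)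
    (h : ¬ ((p.1.val = i ∨ p.1.val = i + 1) ∧ (p.2.val = j ∨ p.2.val = j + 1))) :
    gM m n i j hi hj hm2 p = fM m n i hi hm2 p := by
  simp only [gM]
  rw [if_neg h]

lemma gM_spec_hole (hi : i + 1 < n) (hj : j + 1 < m) (hm2 : m % 2 = 0) (p : V m n)
    (h : (p.1.val = i ∨ p.1.val = i + 1) ∧ (p.2.val = j ∨ p.2.val = j + 1)) :
    gM m n i j hi hj hm2 p = (p.1, (⟨j + (j+1) - p.2.val, by omega⟩ : Fin m)) := by
  simp only [gM]
  rw [if_pos h]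
  rcases h.2 with h2 | h2
  · rw [if_pos h2]
    exact Prod.ext rfl (Fin.ext (by simp only [Fin.val_mk]; omega))
  · rw [if_neg (by omega)]
    exact Prod.ext rfl (Fin.ext (by simp only [Fin.val_mk]; omega))

lemma fM_not_hole (hi : i + 1 < n) (hj : j + 1 < m) (hm2 : m % 2 = 0) (p : V m n)
    (h : ¬ ((p.1.val = i ∨ p.1.val = i + 1) ∧ (p.2.val = j ∨ p.2.val = j + 1))) :
    ¬ (((fM m n i hi hm2 p).1.val = i ∨ (fM m n i hi hm2 p).1.val = i + 1)
       ∧ ((fM m n i hi hm2 p).2.val = j ∨ (fM m n i hi hm2 p).2.val = j + 1)) := by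
  by_cases h1 : p.1.val = i ∨ p.1.val = i + 1
  · rw [fM_spec1 hi hm2 p h1]
    simp only [Fin.val_mk]
    intro hc
    exact h ⟨h1, hc.2⟩
  · by_cases h2 : p.2.val % 2 = 0
    · rw [fM_spec2 hi hm2 p h1 h2]
      intro hc
      exact h1 hc.1
    · rw [fM_spec3 hi hm2 p h1 h2]
      intro hc
      exact h1 hc.1

lemma gM_invol (hi : i + 1 < n) (hj : j + 1 < m) (hm2 : m % 2 = 0) :
    Function.Involutive (gM m n i j hi hj hm2) := by
  intro p
  by_cases h : (p.1.val = i ∨ p.1.val = i + 1) ∧ (p.2.val = j ∨ p.2.val = j + 1)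
  · rw [gM_spec_hole hi hj hm2 p h,
      gM_spec_hole hi hj hm2 _ (by
        constructor
        · exact h.1
        · simp only [Fin.val_mk]; omega)]
    exact Prod.ext rfl (Fin.ext (by simp only [Fin.val_mk]; omega))
  · rw [gM_not_hole hi hj hm2 p h, gM_not_hole hi hj hm2 _ (fM_not_hole hi hj hm2 p h)]
    exact fM_invol hi hm2 p

lemma gM_adj (hi : i + 1 < n) (hj : j + 1 < m) (hm2 : m % 2 = 0) (p : V m n) :
    (gridGraph m n).Adj p (gM m n i j hi hj hm2 p) := by
  by_cases h : (p.1.val = i ∨ p.1.val = i + 1) ∧ (p.2.val = j ∨ p.2.val = j + 1)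
  · rw [gM_spec_hole hi hj hm2 p h]
    show Nat.dist _ _ + Nat.dist _ _ = 1
    simp only [Fin.val_mk, Nat.dist]
    rcases h.2 with h2 | h2 <;> omega
  · rw [gM_not_hole hi hj hm2 p h]
    exact fM_adj hi hm2 p

lemma diff_eq_q_meven (hi : i + 1 < n) (hj : j + 1 < m) (hm2 : m % 2 = 0) (u w : V m n) :
    (if fM m n i hi hm2 u = w then (1:ℝ) else 0)
      - (if gM m n i j hi hj hm2 u = w then (1:ℝ) else 0)
    = q m n i j hi hj s(u, w) := by
  by_cases hu : (u.1.val = i ∨ u.1.val = i + 1) ∧ (u.2.val = j ∨ u.2.val = j + 1)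
  · rw [fM_spec1 hi hm2 u hu.1, gM_spec_hole hi hj hm2 u hu]
    simp only [q]
    rw [if_congr (show (((⟨i + (i+1) - u.1.val, by omega⟩ : Fin n), u.2) = w)
        ↔ (w.1.val = i + (i+1) - u.1.val ∧ w.2.val = u.2.val) by
      simp only [Prod.ext_iff, Fin.ext_iff, Fin.val_mk]; omega) rfl rfl]
    rw [if_congr (show ((u.1, (⟨j + (j+1) - u.2.val, by omega⟩ : Fin m)) = w)
        ↔ (w.1.val = u.1.val ∧ w.2.val = j + (j+1) - u.2.val) by
      simp only [Prod.ext_iff, Fin.ext_iff, Fin.val_mk]; omega) rfl rfl]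
    rw [if_congr (show (s(u,w) = hedge m n i j hi (by omega))
        ↔ (u.2.val = j ∧ (w.1.val = i + (i+1) - u.1.val ∧ w.2.val = u.2.val)) by
      simp only [hedge, Sym2.eq_iff, Prod.ext_iff, Fin.ext_iff, Fin.val_mk]
      obtain ⟨hu1, hu2⟩ := hu
      omega) rfl rfl]
    rw [if_congr (show (s(u,w) = hedge m n i (j+1) hi hj)
        ↔ (u.2.val = j + 1 ∧ (w.1.val = i + (i+1) - u.1.val ∧ w.2.val = u.2.val)) by
      simp only [hedge, Sym2.eq_iff, Prod.ext_iff, Fin.ext_iff, Fin.val_mk]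
      obtain ⟨hu1, hu2⟩ := hu
      omega) rfl rfl]
    rw [if_congr (show (s(u,w) = vedge m n i j (by omega) hj)
        ↔ (u.1.val = i ∧ (w.1.val = u.1.val ∧ w.2.val = j + (j+1) - u.2.val)) by
      simp only [vedge, Sym2.eq_iff, Prod.ext_iff, Fin.ext_iff, Fin.val_mk]
      obtain ⟨hu1, hu2⟩ := hu
      omega) rfl rfl]
    rw [if_congr (show (s(u,w) = vedge m n (i+1) j hi hj)
        ↔ (u.1.val = i + 1 ∧ (w.1.val = u.1.val ∧ w.2.val = j + (j+1) - u.2.val)) by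
      simp only [vedge, Sym2.eq_iff, Prod.ext_iff, Fin.ext_iff, Fin.val_mk]
      obtain ⟨hu1, hu2⟩ := hu
      omega) rfl rfl]
    by_cases hA : (w.1.val = i + (i+1) - u.1.val ∧ w.2.val = u.2.val) <;>
      by_cases hB : (w.1.val = u.1.val ∧ w.2.val = j + (j+1) - u.2.val) <;>
      simp only [hA, hB, and_true, and_false, if_true, if_false] <;>
      obtain ⟨hu1, hu2⟩ := hu <;>
      first
        | (split_ifs <;> first | omega | norm_num)
        | norm_num
  · rw [gM_not_hole hi hj hm2 u hu, sub_self]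
    simp only [q]
    rw [if_neg (show ¬ (s(u,w) = hedge m n i j hi (by omega)) by
      simp only [hedge, Sym2.eq_iff, Prod.ext_iff, Fin.ext_iff, Fin.val_mk]; omega)]
    rw [if_neg (show ¬ (s(u,w) = hedge m n i (j+1) hi hj) by
      simp only [hedge, Sym2.eq_iff, Prod.ext_iff, Fin.ext_iff, Fin.val_mk]; omega)]
    rw [if_neg (show ¬ (s(u,w) = vedge m n i j (by omega) hj) by
      simp only [vedge, Sym2.eq_iff, Prod.ext_iff, Fin.ext_iff, Fin.val_mk]; omega)]
    rw [if_neg (show ¬ (s(u,w) = vedge m n (i+1) j hi hj) by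
      simp only [vedge, Sym2.eq_iff, Prod.ext_iff, Fin.ext_iff, Fin.val_mk]; omega)]
    norm_num

end MEven


section NEven
variable (m n i j : ℕ)

def fN (hj : j + 1 < m) (hn2 : n % 2 = 0) : V m n → V m n := fun p =>
  if h : p.2.val = j ∨ p.2.val = j + 1 then
    (p.1, (⟨j + (j+1) - p.2.val, by omega⟩ : Fin m))
  else
    (if h2 : p.1.val % 2 = 0 then (⟨p.1.val + 1, by have := p.1.isLt; omega⟩ : Fin n)
       else (⟨p.1.val - 1, by have := p.1.isLt; omega⟩ : Fin n), p.2)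

def gN (hi : i + 1 < n) (hj : j + 1 < m) (hn2 : n % 2 = 0) : V m n → V m n := fun p =>
  if h : (p.1.val = i ∨ p.1.val = i + 1) ∧ (p.2.val = j ∨ p.2.val = j + 1) then
    ((⟨i + (i+1) - p.1.val, by omega⟩ : Fin n), p.2)
  else fN m n j hj hn2 p

variable {m n i j}

lemma fN_spec1 (hj : j + 1 < m) (hn2 : n % 2 = 0) (p : V m n)
    (h : p.2.val = j ∨ p.2.val = j + 1) :
    fN m n j hj hn2 p = (p.1, (⟨j + (j+1) - p.2.val, by omega⟩ : Fin m)) := by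
  simp only [fN]
  rw [dif_pos h]

lemma fN_spec2 (hj : j + 1 < m) (hn2 : n % 2 = 0) (p : V m n)
    (h : ¬ (p.2.val = j ∨ p.2.val = j + 1)) (h2 : p.1.val % 2 = 0) :
    fN m n j hj hn2 p = ((⟨p.1.val + 1, by have := p.1.isLt; omega⟩ : Fin n), p.2) := by
  simp only [fN]
  rw [dif_neg h, dif_pos h2]

lemma fN_spec3 (hj : j + 1 < m) (hn2 : n % 2 = 0) (p : V m n)
    (h : ¬ (p.2.val = j ∨ p.2.val = j + 1)) (h2 : ¬ p.1.val % 2 = 0) :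
    fN m n j hj hn2 p = ((⟨p.1.val - 1, by have := p.1.isLt; omega⟩ : Fin n), p.2) := by
  simp only [fN]
  rw [dif_neg h, dif_neg h2]

lemma fN_invol (hj : j + 1 < m) (hn2 : n % 2 = 0) : Function.Involutive (fN m n j hj hn2) := by
  intro p
  by_cases h : p.2.val = j ∨ p.2.val = j + 1
  · rw [fN_spec1 hj hn2 p h]
    have e2 := fN_spec1 hj hn2 (p.1, (⟨j + (j+1) - p.2.val, by omega⟩ : Fin m))
      (show j + (j+1) - p.2.val = j ∨ j + (j+1) - p.2.val = j + 1 by omega)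
    rw [e2]
    exact Prod.ext rfl (Fin.ext (show j + (j+1) - (j + (j+1) - p.2.val) = p.2.val by omega))
  · by_cases h2 : p.1.val % 2 = 0
    · rw [fN_spec2 hj hn2 p h h2]
      have e2 := fN_spec3 hj hn2 ((⟨p.1.val + 1, by have := p.1.isLt; omega⟩ : Fin n), p.2) h
        (show ¬ (p.1.val + 1) % 2 = 0 by omega)
      rw [e2]
      exact Prod.ext (Fin.ext (show p.1.val + 1 - 1 = p.1.val by omega)) rfl
    · rw [fN_spec3 hj hn2 p h h2]
      have e2 := fN_spec2 hj hn2 ((⟨p.1.val - 1, by have := p.1.isLt; omega⟩ : Fin n), p.2) h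
        (show (p.1.val - 1) % 2 = 0 by omega)
      rw [e2]
      exact Prod.ext (Fin.ext (show p.1.val - 1 + 1 = p.1.val by omega)) rfl

lemma fN_adj (hj : j + 1 < m) (hn2 : n % 2 = 0) (p : V m n) :
    (gridGraph m n).Adj p (fN m n j hj hn2 p) := by
  by_cases h : p.2.val = j ∨ p.2.val = j + 1
  · rw [fN_spec1 hj hn2 p h]
    show Nat.dist _ _ + Nat.dist _ _ = 1
    simp only [Fin.val_mk, Nat.dist]
    omega
  · by_cases h2 : p.1.val % 2 = 0
    · rw [fN_spec2 hj hn2 p h h2]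
      show Nat.dist _ _ + Nat.dist _ _ = 1
      simp only [Fin.val_mk, Nat.dist]
      omega
    · rw [fN_spec3 hj hn2 p h h2]
      show Nat.dist _ _ + Nat.dist _ _ = 1
      simp only [Fin.val_mk, Nat.dist]
      omega

lemma gN_not_hole (hi : i + 1 < n) (hj : j + 1 < m) (hn2 : n % 2 = 0) (p : V m n)
    (h : ¬ ((p.1.val = i ∨ p.1.val = i + 1) ∧ (p.2.val = j ∨ p.2.val = j + 1))) :
    gN m n i j hi hj hn2 p = fN m n j hj hn2 p := by
  simp only [gN]
  rw [dif_neg h]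

lemma gN_spec_hole (hi : i + 1 < n) (hj : j + 1 < m) (hn2 : n % 2 = 0) (p : V m n)
    (h : (p.1.val = i ∨ p.1.val = i + 1) ∧ (p.2.val = j ∨ p.2.val = j + 1)) :
    gN m n i j hi hj hn2 p = ((⟨i + (i+1) - p.1.val, by omega⟩ : Fin n), p.2) := by
  simp only [gN]
  rw [dif_pos h]

lemma fN_not_hole (hi : i + 1 < n) (hj : j + 1 < m) (hn2 : n % 2 = 0) (p : V m n)
    (h : ¬ ((p.1.val = i ∨ p.1.val = i + 1) ∧ (p.2.val = j ∨ p.2.val = j + 1))) :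
    ¬ (((fN m n j hj hn2 p).1.val = i ∨ (fN m n j hj hn2 p).1.val = i + 1)
       ∧ ((fN m n j hj hn2 p).2.val = j ∨ (fN m n j hj hn2 p).2.val = j + 1)) := by
  by_cases h1 : p.2.val = j ∨ p.2.val = j + 1
  · rw [fN_spec1 hj hn2 p h1]
    intro hc
    have hc2 : j + (j+1) - p.2.val = j ∨ j + (j+1) - p.2.val = j + 1 := by
      rcases hc.2 with hx | hx
      · exact Or.inl hx
      · exact Or.inr hx
    exact h ⟨hc.1, by omega⟩
  · by_cases h2 : p.1.val % 2 = 0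
    · rw [fN_spec2 hj hn2 p h1 h2]
      intro hc
      exact h1 hc.2
    · rw [fN_spec3 hj hn2 p h1 h2]
      intro hc
      exact h1 hc.2

lemma gN_invol (hi : i + 1 < n) (hj : j + 1 < m) (hn2 : n % 2 = 0) :
    Function.Involutive (gN m n i j hi hj hn2) := by
  intro p
  by_cases h : (p.1.val = i ∨ p.1.val = i + 1) ∧ (p.2.val = j ∨ p.2.val = j + 1)
  · rw [gN_spec_hole hi hj hn2 p h]
    have e2 := gN_spec_hole hi hj hn2 ((⟨i + (i+1) - p.1.val, by omega⟩ : Fin n), p.2)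
      (by constructor
          · simp only [Fin.val_mk]; omega
          · exact h.2)
    rw [e2]
    exact Prod.ext (Fin.ext (show i + (i+1) - (i + (i+1) - p.1.val) = p.1.val by omega)) rfl
  · rw [gN_not_hole hi hj hn2 p h, gN_not_hole hi hj hn2 _ (fN_not_hole hi hj hn2 p h)]
    exact fN_invol hj hn2 p

lemma gN_adj (hi : i + 1 < n) (hj : j + 1 < m) (hn2 : n % 2 = 0) (p : V m n) :
    (gridGraph m n).Adj p (gN m n i j hi hj hn2 p) := by
  by_cases h : (p.1.val = i ∨ p.1.val = i + 1) ∧ (p.2.val = j ∨ p.2.val = j + 1)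
  · rw [gN_spec_hole hi hj hn2 p h]
    show Nat.dist _ _ + Nat.dist _ _ = 1
    simp only [Fin.val_mk, Nat.dist]
    rcases h.1 with h1 | h1 <;> omega
  · rw [gN_not_hole hi hj hn2 p h]
    exact fN_adj hj hn2 p

lemma diff_eq_q_neven (hi : i + 1 < n) (hj : j + 1 < m) (hn2 : n % 2 = 0) (u w : V m n) :
    (if gN m n i j hi hj hn2 u = w then (1:ℝ) else 0)
      - (if fN m n j hj hn2 u = w then (1:ℝ) else 0)
    = q m n i j hi hj s(u, w) := by
  by_cases hu : (u.1.val = i ∨ u.1.val = i + 1) ∧ (u.2.val = j ∨ u.2.val = j + 1)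
  · rw [gN_spec_hole hi hj hn2 u hu, fN_spec1 hj hn2 u hu.2]
    simp only [q]
    rw [if_congr (show (((⟨i + (i+1) - u.1.val, by omega⟩ : Fin n), u.2) = w)
        ↔ (w.1.val = i + (i+1) - u.1.val ∧ w.2.val = u.2.val) by
      simp only [Prod.ext_iff, Fin.ext_iff, Fin.val_mk]; omega) rfl rfl]
    rw [if_congr (show ((u.1, (⟨j + (j+1) - u.2.val, by omega⟩ : Fin m)) = w)
        ↔ (w.1.val = u.1.val ∧ w.2.val = j + (j+1) - u.2.val) by
      simp only [Prod.ext_iff, Fin.ext_iff, Fin.val_mk]; omega) rfl rfl]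
    rw [if_congr (show (s(u,w) = hedge m n i j hi (by omega))
        ↔ (u.2.val = j ∧ (w.1.val = i + (i+1) - u.1.val ∧ w.2.val = u.2.val)) by
      simp only [hedge, Sym2.eq_iff, Prod.ext_iff, Fin.ext_iff, Fin.val_mk]
      obtain ⟨hu1, hu2⟩ := hu
      omega) rfl rfl]
    rw [if_congr (show (s(u,w) = hedge m n i (j+1) hi hj)
        ↔ (u.2.val = j + 1 ∧ (w.1.val = i + (i+1) - u.1.val ∧ w.2.val = u.2.val)) by
      simp only [hedge, Sym2.eq_iff, Prod.ext_iff, Fin.ext_iff, Fin.val_mk]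
      obtain ⟨hu1, hu2⟩ := hu
      omega) rfl rfl]
    rw [if_congr (show (s(u,w) = vedge m n i j (by omega) hj)
        ↔ (u.1.val = i ∧ (w.1.val = u.1.val ∧ w.2.val = j + (j+1) - u.2.val)) by
      simp only [vedge, Sym2.eq_iff, Prod.ext_iff, Fin.ext_iff, Fin.val_mk]
      obtain ⟨hu1, hu2⟩ := hu
      omega) rfl rfl]
    rw [if_congr (show (s(u,w) = vedge m n (i+1) j hi hj)
        ↔ (u.1.val = i + 1 ∧ (w.1.val = u.1.val ∧ w.2.val = j + (j+1) - u.2.val)) by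
      simp only [vedge, Sym2.eq_iff, Prod.ext_iff, Fin.ext_iff, Fin.val_mk]
      obtain ⟨hu1, hu2⟩ := hu
      omega) rfl rfl]
    by_cases hA : (w.1.val = i + (i+1) - u.1.val ∧ w.2.val = u.2.val) <;>
      by_cases hB : (w.1.val = u.1.val ∧ w.2.val = j + (j+1) - u.2.val) <;>
      simp only [hA, hB, and_true, and_false, if_true, if_false] <;>
      obtain ⟨hu1, hu2⟩ := hu <;>
      first
        | (split_ifs <;> first | omega | norm_num)
        | norm_num
  · rw [gN_not_hole hi hj hn2 u hu, sub_self]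
    simp only [q]
    rw [if_neg (show ¬ (s(u,w) = hedge m n i j hi (by omega)) by
      simp only [hedge, Sym2.eq_iff, Prod.ext_iff, Fin.ext_iff, Fin.val_mk]; omega)]
    rw [if_neg (show ¬ (s(u,w) = hedge m n i (j+1) hi hj) by
      simp only [hedge, Sym2.eq_iff, Prod.ext_iff, Fin.ext_iff, Fin.val_mk]; omega)]
    rw [if_neg (show ¬ (s(u,w) = vedge m n i j (by omega) hj) by
      simp only [vedge, Sym2.eq_iff, Prod.ext_iff, Fin.ext_iff, Fin.val_mk]; omega)]
    rw [if_neg (show ¬ (s(u,w) = vedge m n (i+1) j hi hj) by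
      simp only [vedge, Sym2.eq_iff, Prod.ext_iff, Fin.ext_iff, Fin.val_mk]; omega)]
    norm_num

end NEven


lemma q_mem_vspan (hi : i+1 < n) (hj : j+1 < m) (hpar : m % 2 = 0 ∨ n % 2 = 0) :
    q m n i j hi hj ∈ vectorSpan ℝ (pmSet (gridGraph m n)) := by
  classical
  rcases hpar with hm2 | hn2
  · have hMf := matchSub_isPM (gridGraph m n) _ (fM_invol hi hm2) (fM_adj hi hm2)
    have hMg := matchSub_isPM (gridGraph m n) _ (gM_invol hi hj hm2) (gM_adj hi hj hm2)
    have hdiff : Set.indicator (matchSub (gridGraph m n) _ (fM_invol hi hm2) (fM_adj hi hm2)).edgeSet (1 : Sym2 (V m n) → ℝ)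
        - Set.indicator (matchSub (gridGraph m n) _ (gM_invol hi hj hm2) (gM_adj hi hj hm2)).edgeSet 1
        = q m n i j hi hj := by
      funext e
      induction e using Sym2.ind with
      | _ u w =>
      show Set.indicator _ (1 : Sym2 (V m n) → ℝ) s(u,w) - Set.indicator _ (1 : Sym2 (V m n) → ℝ) s(u,w) = _
      rw [matchSub_ind, matchSub_ind]
      exact diff_eq_q_meven hi hj hm2 u w
    rw [← hdiff]
    exact vsub_mem_vectorSpan ℝ ⟨_, hMf, rfl⟩ ⟨_, hMg, rfl⟩
  · have hMf := matchSub_isPM (gridGraph m n) _ (fN_invol hj hn2) (fN_adj hj hn2)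
    have hMg := matchSub_isPM (gridGraph m n) _ (gN_invol hi hj hn2) (gN_adj hi hj hn2)
    have hdiff : Set.indicator (matchSub (gridGraph m n) _ (gN_invol hi hj hn2) (gN_adj hi hj hn2)).edgeSet (1 : Sym2 (V m n) → ℝ)
        - Set.indicator (matchSub (gridGraph m n) _ (fN_invol hj hn2) (fN_adj hj hn2)).edgeSet 1
        = q m n i j hi hj := by
      funext e
      induction e using Sym2.ind with
      | _ u w =>
      show Set.indicator _ (1 : Sym2 (V m n) → ℝ) s(u,w) - Set.indicator _ (1 : Sym2 (V m n) → ℝ) s(u,w) = _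
      rw [matchSub_ind, matchSub_ind]
      exact diff_eq_q_neven hi hj hn2 u w
    rw [← hdiff]
    exact vsub_mem_vectorSpan ℝ ⟨_, hMg, rfl⟩ ⟨_, hMf, rfl⟩

lemma main_span (hpar : m % 2 = 0 ∨ n % 2 = 0) :
    vectorSpan ℝ (pmSet (gridGraph m n)) = Submodule.span ℝ (Set.range (Qf m n)) := by
  apply le_antisymm
  · refine le_trans (vspan_le_K _) (K_le_span ?_)
    intro i j hi hj
    exact vspan_le_K _ (q_mem_vspan hi hj hpar)
  · rw [Submodule.span_le]
    rintro _ ⟨p, rfl⟩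
    have : Qf m n p = q m n p.1.val p.2.val (by have := p.1.isLt; omega) (by have := p.2.isLt; omega) := by
      rw [Qf, qt_eq]
    rw [this]
    exact q_mem_vspan _ _ hpar

end PM

/-- If `m, n ≥ 1` and `mn` is even, then
`dim P(m,n) = (m - 1)(n - 1)`. -/
theorem pm_polytope_grid_dim (m n : ℕ) (hm : 1 ≤ m) (hn : 1 ≤ n)
    (heven : Even (m * n)) :
    polytopeDim (pmPolytope (gridGraph m n)) = (m - 1) * (n - 1) := by
  have hpar : m % 2 = 0 ∨ n % 2 = 0 := by
    rcases Nat.even_mul.mp heven with h | h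
    · exact Or.inl (Nat.even_iff.mp h)
    · exact Or.inr (Nat.even_iff.mp h)
  have h1 : vectorSpan ℝ (convexHull ℝ (PM.pmSet (gridGraph m n)))
      = vectorSpan ℝ (PM.pmSet (gridGraph m n)) := by
    rw [← direction_affineSpan, affineSpan_convexHull, direction_affineSpan]
  have h2 : polytopeDim (pmPolytope (gridGraph m n))
      = Module.finrank ℝ (vectorSpan ℝ (convexHull ℝ (PM.pmSet (gridGraph m n)))) := rfl
  rw [h2, h1, PM.main_span hpar, finrank_span_eq_card (PM.Qf_linIndep),
    Fintype.card_prod, Fintype.card_fin, Fintype.card_fin, Nat.mul_comm]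
end

section
/- Let n > 2 be even, let t ≥ 0 be an integer, and let x be a magic labelling of sum t of the grid graph G(3,n). For 1 ≤ i ≤ n−1, let a_i, b_i, c_i denote the labels x assigns to the horizontal edges {(i−1,2),(i,2)}, {(i−1,1),(i,1)}, {(i−1,0),(i,0)} (top, middle, and bottom rows, respectively). Then c_i = b_i − a_i for all even i, and c_i = t − a_i + b_i for all odd i. -/
open Finset Pointwise

lemma sum_insert' {α M : Type*} [DecidableEq α] [AddCommMonoid M] (f : α → M) (a : α)
    (s : Finset α) (h : a ∈ s → f a = 0) : ∑ x ∈ insert a s, f x = f a + ∑ x ∈ s, f x := by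
  by_cases ha : a ∈ s
  · rw [Finset.insert_eq_self.2 ha, h ha, zero_add]
  · exact Finset.sum_insert ha

lemma vertex_sum {V : Type*} [Fintype V] [DecidableEq V] {G : SimpleGraph V}
    {x : Sym2 V → ℕ} {t : ℕ} (hx : IsMagicLabelling G x t) (v : V) :
    ∑ w : V, x s(v, w) = t := by
  rw [← hx.2 v]
  refine Finset.sum_bij' (fun (w : V) _ => s(v, w))
    (fun e he => Sym2.Mem.other ((Finset.mem_filter.mp he).2)) ?_ ?_ ?_ ?_ ?_
  · intro a ha; simp
  · intro e he; simp
  · intro a ha; exact Sym2.congr_right.mp (Sym2.other_spec _)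
  · intro e he; exact Sym2.other_spec _
  · intro a ha; rfl

lemma sum_four {V : Type*} [Fintype V] [DecidableEq V] (f : V → ℕ) (w1 w2 w3 w4 : V)
    (h0 : ∀ w, w ≠ w1 → w ≠ w2 → w ≠ w3 → w ≠ w4 → f w = 0)
    (h12 : w1 = w2 → f w1 = 0) (h13 : w1 = w3 → f w1 = 0) (h14 : w1 = w4 → f w1 = 0)
    (h23 : w2 = w3 → f w2 = 0) (h24 : w2 = w4 → f w2 = 0) (h34 : w3 = w4 → f w3 = 0) :
    ∑ w, f w = f w1 + (f w2 + (f w3 + f w4)) := by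
  have hsub : ∑ w, f w = ∑ w ∈ ({w1, w2, w3, w4} : Finset V), f w := by
    refine (Finset.sum_subset (Finset.subset_univ _) ?_).symm
    intro w _ hw
    simp only [Finset.mem_insert, Finset.mem_singleton, not_or] at hw
    exact h0 w hw.1 hw.2.1 hw.2.2.1 hw.2.2.2
  rw [hsub]
  rw [sum_insert' f w1 _ (by intro h; simp at h; rcases h with h|h|h; exacts [h12 h, h13 h, h14 h]),
    sum_insert' f w2 _ (by intro h; simp at h; rcases h with h|h; exacts [h23 h, h24 h]),
    sum_insert' f w3 _ (by intro h; simp at h; exact h34 h), Finset.sum_singleton]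

def colF (n : ℕ) (hn : 0 < n) (j : ℕ) : Fin n := ⟨min j (n-1), by omega⟩

def rowF (r : ℕ) : Fin 3 := ⟨min r 2, by omega⟩

lemma vertexEq (n : ℕ) (hn : 2 < n) (x : Sym2 (Fin n × Fin 3) → ℕ) (t : ℕ)
    (hx : IsMagicLabelling (gridGraph 3 n) x t) (j r : ℕ) (hj : j ≤ n - 1) (hr : r ≤ 2) :
    x s((colF n (by omega) j, rowF r), (colF n (by omega) (j-1), rowF r)) +
    (x s((colF n (by omega) j, rowF r), (colF n (by omega) (j+1), rowF r)) +
    (x s((colF n (by omega) j, rowF r), (colF n (by omega) j, rowF (r-1))) +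
    x s((colF n (by omega) j, rowF r), (colF n (by omega) j, rowF (r+1))))) = t := by
  have h0n : 0 < n := by omega
  have hloop : ∀ w : Fin n × Fin 3, x s(w, w) = 0 := by
    intro w
    exact hx.1 _ (by rw [SimpleGraph.mem_edgeSet]; exact (gridGraph 3 n).loopless.irrefl w)
  rw [← vertex_sum hx (colF n h0n j, rowF r)]
  refine (sum_four (fun w => x s((colF n h0n j, rowF r), w))
    (colF n h0n (j-1), rowF r) (colF n h0n (j+1), rowF r)
    (colF n h0n j, rowF (r-1)) (colF n h0n j, rowF (r+1)) ?_ ?_ ?_ ?_ ?_ ?_ ?_).symm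
  · intro w hw1 hw2 hw3 hw4
    refine hx.1 _ ?_
    rw [SimpleGraph.mem_edgeSet]
    intro hadj
    have hadj' : Nat.dist (min j (n-1)) w.1.val + Nat.dist (min r 2) w.2.val = 1 := hadj
    have hkey : w = (colF n h0n (j-1), rowF r) ∨ w = (colF n h0n (j+1), rowF r) ∨
        w = (colF n h0n j, rowF (r-1)) ∨ w = (colF n h0n j, rowF (r+1)) := by
      obtain ⟨⟨wi, hwi⟩, ⟨wr, hwr⟩⟩ := w
      simp only [Nat.dist] at hadj'
      have : (wi = min (j-1) (n-1) ∧ wr = min r 2) ∨ (wi = min (j+1) (n-1) ∧ wr = min r 2) ∨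
          (wi = min j (n-1) ∧ wr = min (r-1) 2) ∨ (wi = min j (n-1) ∧ wr = min (r+1) 2) := by
        omega
      rcases this with ⟨e1, e2⟩ | ⟨e1, e2⟩ | ⟨e1, e2⟩ | ⟨e1, e2⟩
      · exact Or.inl (Prod.ext (Fin.ext e1) (Fin.ext e2))
      · exact Or.inr (Or.inl (Prod.ext (Fin.ext e1) (Fin.ext e2)))
      · exact Or.inr (Or.inr (Or.inl (Prod.ext (Fin.ext e1) (Fin.ext e2))))
      · exact Or.inr (Or.inr (Or.inr (Prod.ext (Fin.ext e1) (Fin.ext e2))))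
    rcases hkey with h | h | h | h
    exacts [hw1 h, hw2 h, hw3 h, hw4 h]
  · intro h
    have h1 : min (j-1) (n-1) = min (j+1) (n-1) := congrArg (fun p => p.1.1) h
    exact absurd h1 (by omega)
  · intro h
    have h1 : min (j-1) (n-1) = min j (n-1) := congrArg (fun p => p.1.1) h
    have hc : colF n h0n (j-1) = colF n h0n j := Fin.ext h1
    rw [hc]
    exact hloop _
  · intro h
    have h1 : min (j-1) (n-1) = min j (n-1) := congrArg (fun p => p.1.1) h
    have hc : colF n h0n (j-1) = colF n h0n j := Fin.ext h1
    rw [hc]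
    exact hloop _
  · intro h
    have h1 : min (j+1) (n-1) = min j (n-1) := congrArg (fun p => p.1.1) h
    have hc : colF n h0n (j+1) = colF n h0n j := Fin.ext h1
    rw [hc]
    exact hloop _
  · intro h
    have h1 : min (j+1) (n-1) = min j (n-1) := congrArg (fun p => p.1.1) h
    have hc : colF n h0n (j+1) = colF n h0n j := Fin.ext h1
    rw [hc]
    exact hloop _
  · intro h
    have h2 : min (r-1) 2 = min (r+1) 2 := congrArg (fun p => p.2.1) h
    exact absurd h2 (by omega)

lemma keyrel (n : ℕ) (hn : 2 < n) (x : Sym2 (Fin n × Fin 3) → ℕ) (t : ℕ)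
    (hx : IsMagicLabelling (gridGraph 3 n) x t) (j : ℕ) (hj : j ≤ n - 1) :
    ((x s((colF n (by omega) (j-1), rowF 0), (colF n (by omega) j, rowF 0)) : ℤ) +
     (x s((colF n (by omega) (j-1), rowF 2), (colF n (by omega) j, rowF 2)) : ℤ) -
     (x s((colF n (by omega) (j-1), rowF 1), (colF n (by omega) j, rowF 1)) : ℤ)) +
    ((x s((colF n (by omega) j, rowF 0), (colF n (by omega) (j+1), rowF 0)) : ℤ) +
     (x s((colF n (by omega) j, rowF 2), (colF n (by omega) (j+1), rowF 2)) : ℤ) -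
     (x s((colF n (by omega) j, rowF 1), (colF n (by omega) (j+1), rowF 1)) : ℤ)) = t := by
  have h0n : 0 < n := by omega
  have hloop : ∀ w : Fin n × Fin 3, x s(w, w) = 0 := by
    intro w
    exact hx.1 _ (by rw [SimpleGraph.mem_edgeSet]; exact (gridGraph 3 n).loopless.irrefl w)
  have e0 := vertexEq n hn x t hx j 0 hj (by omega)
  have e1 := vertexEq n hn x t hx j 1 hj (by omega)
  have e2 := vertexEq n hn x t hx j 2 hj (by omega)
  norm_num at e0 e1 e2
  have h32 : rowF 3 = rowF 2 := by decide
  rw [h32] at e2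
  rw [hloop] at e0 e2
  rw [show (s((colF n h0n j, rowF 0), (colF n h0n (j-1), rowF 0)) : Sym2 (Fin n × Fin 3)) =
      s((colF n h0n (j-1), rowF 0), (colF n h0n j, rowF 0)) from Sym2.eq_swap] at e0
  rw [show (s((colF n h0n j, rowF 1), (colF n h0n (j-1), rowF 1)) : Sym2 (Fin n × Fin 3)) =
      s((colF n h0n (j-1), rowF 1), (colF n h0n j, rowF 1)) from Sym2.eq_swap] at e1
  rw [show (s((colF n h0n j, rowF 1), (colF n h0n j, rowF 0)) : Sym2 (Fin n × Fin 3)) =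
      s((colF n h0n j, rowF 0), (colF n h0n j, rowF 1)) from Sym2.eq_swap] at e1
  rw [show (s((colF n h0n j, rowF 2), (colF n h0n (j-1), rowF 2)) : Sym2 (Fin n × Fin 3)) =
      s((colF n h0n (j-1), rowF 2), (colF n h0n j, rowF 2)) from Sym2.eq_swap] at e2
  rw [show (s((colF n h0n j, rowF 2), (colF n h0n j, rowF 1)) : Sym2 (Fin n × Fin 3)) =
      s((colF n h0n j, rowF 1), (colF n h0n j, rowF 2)) from Sym2.eq_swap] at e2
  omega

/-- Let `n > 2` be even and `x` a magic labelling of sum `t` of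
`G(3,n)`. With `a_i`, `b_i`, `c_i` the labels of the `i`-th horizontal edges in the
top (row 2), middle (row 1), and bottom (row 0) rows, one has `c_i = b_i - a_i` for
even `i` and `c_i = t - a_i + b_i` for odd `i`. -/
theorem magic_labelling_grid_three_rows (n : ℕ) (hn : 2 < n) (hne : Even n) (t : ℕ)
    (x : Sym2 (Fin n × Fin 3) → ℕ) (hx : IsMagicLabelling (gridGraph 3 n) x t)
    (i : ℕ) (h1 : 1 ≤ i) (h2 : i ≤ n - 1) :
    (Even i →
      (x s(((⟨i - 1, by omega⟩ : Fin n), (0 : Fin 3)), ((⟨i, by omega⟩ : Fin n), (0 : Fin 3))) : ℤ) =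
        (x s(((⟨i - 1, by omega⟩ : Fin n), (1 : Fin 3)), ((⟨i, by omega⟩ : Fin n), (1 : Fin 3))) : ℤ) -
        (x s(((⟨i - 1, by omega⟩ : Fin n), (2 : Fin 3)), ((⟨i, by omega⟩ : Fin n), (2 : Fin 3))) : ℤ)) ∧
    (Odd i →
      (x s(((⟨i - 1, by omega⟩ : Fin n), (0 : Fin 3)), ((⟨i, by omega⟩ : Fin n), (0 : Fin 3))) : ℤ) =
        (t : ℤ) -
        (x s(((⟨i - 1, by omega⟩ : Fin n), (2 : Fin 3)), ((⟨i, by omega⟩ : Fin n), (2 : Fin 3))) : ℤ) +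
        (x s(((⟨i - 1, by omega⟩ : Fin n), (1 : Fin 3)), ((⟨i, by omega⟩ : Fin n), (1 : Fin 3))) : ℤ)) := by
  have h0n : 0 < n := by omega
  have hloop : ∀ w : Fin n × Fin 3, x s(w, w) = 0 := by
    intro w
    exact hx.1 _ (by rw [SimpleGraph.mem_edgeSet]; exact (gridGraph 3 n).loopless.irrefl w)
  set D : ℕ → ℤ := fun j =>
    (x s((colF n h0n (j-1), rowF 0), (colF n h0n j, rowF 0)) : ℤ) +
    (x s((colF n h0n (j-1), rowF 2), (colF n h0n j, rowF 2)) : ℤ) -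
    (x s((colF n h0n (j-1), rowF 1), (colF n h0n j, rowF 1)) : ℤ) with hDdef
  have hD0 : D 0 = 0 := by
    simp only [hDdef]
    norm_num
    rw [hloop, hloop, hloop]
    ring
  have hstep : ∀ j, j ≤ n - 1 → D j + D (j+1) = t := by
    intro j hj
    have hk := keyrel n hn x t hx j hj
    simp only [hDdef, Nat.add_sub_cancel]
    exact hk
  have hDval : ∀ j, j ≤ n - 1 → D j = if Even j then 0 else (t : ℤ) := by
    intro j
    induction j with
    | zero => intro _; simpa using hD0
    | succ k ih =>
      intro hk
      have h1' := hstep k (by omega)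
      have h2' := ih (by omega)
      simp only [Nat.even_add_one]
      by_cases he : Even k <;> simp [he] at h2' ⊢ <;> omega
  have hv := hDval i h2
  simp only [hDdef] at hv
  have ec1 : colF n h0n (i-1) = (⟨i-1, by omega⟩ : Fin n) := Fin.ext (by simp [colF]; omega)
  have ec2 : colF n h0n i = (⟨i, by omega⟩ : Fin n) := Fin.ext (by simp [colF]; omega)
  have er0 : rowF 0 = (0 : Fin 3) := by decide
  have er1 : rowF 1 = (1 : Fin 3) := by decide
  have er2 : rowF 2 = (2 : Fin 3) := by decide
  simp only [ec1, ec2, er0, er1, er2] at hv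
  generalize_proofs pa pb at hv ⊢
  constructor
  · intro hev
    rw [if_pos hev] at hv
    omega
  · intro hod
    rw [if_neg (Nat.not_even_iff_odd.mpr hod)] at hv
    omega
end

section
/- For all positive integers m, n, t, every magic labelling of sum t of the grid graph G(m,n) can be written as the sum of the incidence vectors of t perfect matchings of G(m,n) (i.e., every magic labelling of sum t can be realized as a domino stacking of height t of the m×n board). -/
open Finset Pointwise

namespace MagicAux

variable {m n : ℕ}

def Bk (v : Fin n × Fin m) : Prop := (v.1.val + v.2.val) % 2 = 0

instance : DecidablePred (Bk (m := m) (n := n)) := fun v => by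
  unfold Bk; infer_instance

lemma adj_bk {u v : Fin n × Fin m} (h : (gridGraph m n).Adj u v) :
    (Bk u ↔ ¬ Bk v) := by
  change Nat.dist u.1.val v.1.val + Nat.dist u.2.val v.2.val = 1 at h
  simp only [Nat.dist] at h
  unfold Bk
  omega

/-- supported edges at a vertex -/
def Es (x : Sym2 (Fin n × Fin m) → ℕ) (v : Fin n × Fin m) : Finset (Sym2 (Fin n × Fin m)) :=
  Finset.univ.filter (fun e => v ∈ e ∧ x e ≠ 0)

lemma mem_Es {x : Sym2 (Fin n × Fin m) → ℕ} {v : Fin n × Fin m} {e : Sym2 (Fin n × Fin m)} :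
    e ∈ Es x v ↔ v ∈ e ∧ x e ≠ 0 := by
  simp [Es]

variable {t : ℕ} {x : Sym2 (Fin n × Fin m) → ℕ}
  (hx : IsMagicLabelling (gridGraph m n) x (t+1))

include hx

lemma hsupp : ∀ e : Sym2 (Fin n × Fin m), x e ≠ 0 → e ∈ (gridGraph m n).edgeSet := by
  intro e he
  by_contra h
  exact he (hx.1 e h)

lemma sum_Es : ∀ v : Fin n × Fin m, ∑ e ∈ Es x v, x e = t + 1 := by
  intro v
  classical
  have h1 : Es x v
      = (Finset.univ.filter (fun e : Sym2 (Fin n × Fin m) => v ∈ e)).filter (fun e => x e ≠ 0) := by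
    rw [Es, Finset.filter_filter]
  rw [h1, Finset.sum_filter_ne_zero]
  exact hx.2 v

lemma disjEs : ∀ (A : Finset (Fin n × Fin m)), (∀ u ∈ A, ∀ v ∈ A, (Bk u ↔ Bk v)) →
    (↑A : Set (Fin n × Fin m)).PairwiseDisjoint (Es x) := by
  intro A hA u hu v hv huv
  simp only [Function.onFun]
  rw [Finset.disjoint_left]
  intro e he1 he2
  rw [mem_Es] at he1 he2
  have hedge : e ∈ (gridGraph m n).edgeSet := hsupp hx e he1.2
  have : e = s(u, v) :=
    Sym2.eq_of_ne_mem huv he1.1 he2.1 (Sym2.mem_mk_left u v) (Sym2.mem_mk_right u v)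
  rw [this, SimpleGraph.mem_edgeSet] at hedge
  have h1 := adj_bk hedge
  have h2 := hA u hu v hv
  tauto

lemma side_sum : ∀ (A : Finset (Fin n × Fin m)),
    (↑A : Set (Fin n × Fin m)).PairwiseDisjoint (Es x) →
    ∑ e ∈ A.biUnion (Es x), x e = (t+1) * A.card := by
  intro A hA
  rw [Finset.sum_biUnion hA]
  have : ∀ v ∈ A, ∑ e ∈ Es x v, x e = t + 1 := fun v _ => sum_Es hx v
  rw [Finset.sum_congr rfl this, Finset.sum_const, smul_eq_mul, mul_comm]

lemma other_endpoint : ∀ (v : Fin n × Fin m) (e : Sym2 (Fin n × Fin m)), e ∈ Es x v →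
    ∃ w : Fin n × Fin m, e = s(v, w) ∧ (gridGraph m n).Adj v w ∧ x e ≠ 0 ∧ e ∈ Es x w := by
  intro v e he
  rw [mem_Es] at he
  obtain ⟨w, rfl⟩ := Sym2.mem_iff_exists.mp he.1
  refine ⟨w, rfl, ?_, he.2, ?_⟩
  · exact (SimpleGraph.mem_edgeSet _).mp (hsupp hx _ he.2)
  · rw [mem_Es]
    exact ⟨Sym2.mem_mk_right v w, he.2⟩

end MagicAux

namespace MagicAux

variable {m n t : ℕ} {x : Sym2 (Fin n × Fin m) → ℕ}
  (hx : IsMagicLabelling (gridGraph m n) x (t+1))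

include hx

lemma exists_pairing :
    ∃ p : Fin n × Fin m → Fin n × Fin m,
      (∀ v, p (p v) = v) ∧
      (∀ v, (gridGraph m n).Adj v (p v) ∧ x s(v, p v) ≠ 0) := by
  classical
  set B := {v : Fin n × Fin m // Bk v}
  set W := {v : Fin n × Fin m // ¬ Bk v}
  set r : B → Finset W := fun b =>
    Finset.univ.filter (fun w : W => (gridGraph m n).Adj b.1 w.1 ∧ x s(b.1, w.1) ≠ 0) with hr
  have hmemr : ∀ (b : B) (w : W), w ∈ r b ↔
      (gridGraph m n).Adj b.1 w.1 ∧ x s(b.1, w.1) ≠ 0 := by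
    intro b w; simp [hr]
  -- Hall condition
  have hall : ∀ A : Finset B, A.card ≤ (A.biUnion r).card := by
    intro A
    set A' : Finset (Fin n × Fin m) := A.image Subtype.val with hA'
    set N : Finset W := A.biUnion r with hN
    set N' : Finset (Fin n × Fin m) := N.image Subtype.val with hN'
    have hcardA : A'.card = A.card := Finset.card_image_of_injective _ Subtype.val_injective
    have hcardN : N'.card = N.card := Finset.card_image_of_injective _ Subtype.val_injective
    have hdA : (↑A' : Set (Fin n × Fin m)).PairwiseDisjoint (Es x) := by
      refine disjEs hx A' (fun u hu v hv => ?_)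
      rw [hA', Finset.mem_image] at hu hv
      obtain ⟨⟨u', hu'⟩, _, rfl⟩ := hu
      obtain ⟨⟨v', hv'⟩, _, rfl⟩ := hv
      simp [hu', hv']
    have hdN : (↑N' : Set (Fin n × Fin m)).PairwiseDisjoint (Es x) := by
      refine disjEs hx N' (fun u hu v hv => ?_)
      rw [hN', Finset.mem_image] at hu hv
      obtain ⟨⟨u', hu'⟩, _, rfl⟩ := hu
      obtain ⟨⟨v', hv'⟩, _, rfl⟩ := hv
      simp [hu', hv']
    have hsub : A'.biUnion (Es x) ⊆ N'.biUnion (Es x) := by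
      intro e he
      rw [Finset.mem_biUnion] at he
      obtain ⟨b, hb, hbe⟩ := he
      rw [hA', Finset.mem_image] at hb
      obtain ⟨b', hb', rfl⟩ := hb
      obtain ⟨w, rfl, hadj, hxe, hew⟩ := other_endpoint hx _ _ hbe
      have hwW : ¬ Bk w := (adj_bk hadj).mp b'.2
      rw [Finset.mem_biUnion]
      refine ⟨w, ?_, hew⟩
      rw [hN', Finset.mem_image]
      refine ⟨⟨w, hwW⟩, ?_, rfl⟩
      rw [hN, Finset.mem_biUnion]
      exact ⟨b', hb', (hmemr _ _).mpr ⟨hadj, hxe⟩⟩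
    have h1 : (t+1) * A.card ≤ (t+1) * N.card := by
      rw [← hcardA, ← hcardN, ← side_sum hx A' hdA, ← side_sum hx N' hdN]
      exact Finset.sum_le_sum_of_subset hsub
    exact Nat.le_of_mul_le_mul_left h1 (Nat.succ_pos t)
  obtain ⟨f, hfinj, hfr⟩ := (Finset.all_card_le_biUnion_card_iff_exists_injective r).mp hall
  -- |B| = |W|
  have hcard : Fintype.card B = Fintype.card W := by
    set Bs : Finset (Fin n × Fin m) := Finset.univ.filter Bk with hBs
    set Ws : Finset (Fin n × Fin m) := Finset.univ.filter (fun v => ¬ Bk v) with hWs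
    have hdB : (↑Bs : Set (Fin n × Fin m)).PairwiseDisjoint (Es x) := by
      refine disjEs hx Bs (fun u hu v hv => ?_)
      rw [hBs, Finset.mem_filter] at hu hv
      simp [hu.2, hv.2]
    have hdW : (↑Ws : Set (Fin n × Fin m)).PairwiseDisjoint (Es x) := by
      refine disjEs hx Ws (fun u hu v hv => ?_)
      rw [hWs, Finset.mem_filter] at hu hv
      simp [hu.2, hv.2]
    have hcover : ∀ (P : Fin n × Fin m → Prop) (_ : DecidablePred P),
        (∀ u v : Fin n × Fin m, (gridGraph m n).Adj u v → x s(u,v) ≠ 0 → (P u ∨ P v)) →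
        (Finset.univ.filter P).biUnion (Es x) = Finset.univ.filter (fun e => x e ≠ 0) := by
      intro P _ hP
      ext e
      rw [Finset.mem_biUnion, Finset.mem_filter]
      constructor
      · rintro ⟨v, _, hv⟩
        exact ⟨Finset.mem_univ _, (mem_Es.mp hv).2⟩
      · rintro ⟨_, hxe⟩
        induction e using Sym2.ind with
        | _ u w =>
          have hadj : (gridGraph m n).Adj u w := (SimpleGraph.mem_edgeSet _).mp (hsupp hx _ hxe)
          rcases hP u w hadj hxe with h | h
          · exact ⟨u, Finset.mem_filter.mpr ⟨Finset.mem_univ _, h⟩,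
              mem_Es.mpr ⟨Sym2.mem_mk_left u w, hxe⟩⟩
          · exact ⟨w, Finset.mem_filter.mpr ⟨Finset.mem_univ _, h⟩,
              mem_Es.mpr ⟨Sym2.mem_mk_right u w, hxe⟩⟩
    have hB : Bs.biUnion (Es x) = Finset.univ.filter (fun e => x e ≠ 0) := by
      refine hcover Bk _ (fun u v hadj _ => ?_)
      by_cases h : Bk u
      · exact Or.inl h
      · exact Or.inr (by have := adj_bk hadj; tauto)
    have hW : Ws.biUnion (Es x) = Finset.univ.filter (fun e => x e ≠ 0) := by
      refine hcover (fun v => ¬ Bk v) _ (fun u v hadj _ => ?_)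
      by_cases h : Bk u
      · exact Or.inr (by have := adj_bk hadj; tauto)
      · exact Or.inl h
    have h1 : (t+1) * Bs.card = (t+1) * Ws.card := by
      rw [← side_sum hx Bs hdB, ← side_sum hx Ws hdW, hB, hW]
    have h2 : Bs.card = Ws.card := Nat.eq_of_mul_eq_mul_left (Nat.succ_pos t) h1
    rw [Fintype.card_subtype, Fintype.card_subtype]
    exact h2
  have hfbij : Function.Bijective f :=
    (Fintype.bijective_iff_injective_and_card f).mpr ⟨hfinj, hcard⟩
  set eq := Equiv.ofBijective f hfbij with heq
  -- the pairing
  refine ⟨fun v => if h : Bk v then (f ⟨v, h⟩).1 else (eq.symm ⟨v, h⟩).1, ?_, ?_⟩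
  · intro v
    beta_reduce
    by_cases h : Bk v
    · rw [dif_pos h]
      have h2 : ¬ Bk ((f ⟨v, h⟩).1) := (f ⟨v, h⟩).2
      rw [dif_neg h2]
      have h3 : eq.symm ⟨(f ⟨v, h⟩).1, h2⟩ = ⟨v, h⟩ := by
        apply eq.injective
        rw [Equiv.apply_symm_apply]
        rfl
      rw [h3]
    · rw [dif_neg h]
      have h2 : Bk ((eq.symm ⟨v, h⟩).1) := (eq.symm ⟨v, h⟩).2
      rw [dif_pos h2]
      have h3 : f ⟨(eq.symm ⟨v, h⟩).1, h2⟩ = ⟨v, h⟩ := by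
        have : (⟨(eq.symm ⟨v, h⟩).1, h2⟩ : B) = eq.symm ⟨v, h⟩ := rfl
        rw [this]
        exact eq.apply_symm_apply _
      rw [h3]
  · intro v
    beta_reduce
    by_cases h : Bk v
    · rw [dif_pos h]
      have := (hmemr ⟨v, h⟩ (f ⟨v, h⟩)).mp (hfr ⟨v, h⟩)
      exact this
    · rw [dif_neg h]
      set b := eq.symm ⟨v, h⟩ with hb
      have hfb : f b = ⟨v, h⟩ := eq.apply_symm_apply _
      have := (hmemr b (f b)).mp (hfr b)
      rw [hfb] at this
      refine ⟨this.1.symm, ?_⟩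
      rw [Sym2.eq_swap]
      exact this.2

end MagicAux

namespace MagicAux

variable {m n t : ℕ} {x : Sym2 (Fin n × Fin m) → ℕ}

/-- From a magic labelling of sum `t+1`, extract a perfect matching inside the support. -/
lemma exists_pm (hx : IsMagicLabelling (gridGraph m n) x (t+1)) :
    ∃ M : (gridGraph m n).Subgraph, M.IsPerfectMatching ∧ ∀ e ∈ M.edgeSet, x e ≠ 0 := by
  classical
  obtain ⟨p, hp2, hp1⟩ := exists_pairing hx
  refine ⟨{ verts := Set.univ
            Adj := fun u v => p u = v ∧ p v = u
            adj_sub := by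
              rintro u v ⟨h1, h2⟩
              rw [← h1]
              exact (hp1 u).1
            edge_vert := fun _ => trivial
            symm := by constructor; rintro u v ⟨h1, h2⟩; exact ⟨h2, h1⟩ }, ?_, ?_⟩
  · rw [SimpleGraph.Subgraph.isPerfectMatching_iff]
    intro v
    refine ⟨p v, ⟨rfl, hp2 v⟩, ?_⟩
    rintro w ⟨h1, _⟩
    exact h1.symm
  · intro e he
    induction e using Sym2.ind with
    | _ u v =>
      rw [SimpleGraph.Subgraph.mem_edgeSet] at he
      obtain ⟨h1, _⟩ := he
      subst h1
      exact (hp1 u).2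

lemma matching_filter (M : (gridGraph m n).Subgraph) (hM : M.IsPerfectMatching)
    (v : Fin n × Fin m) :
    ∃ w : Fin n × Fin m, ∀ e : Sym2 (Fin n × Fin m),
      (v ∈ e ∧ e ∈ M.edgeSet) ↔ e = s(v, w) := by
  obtain ⟨w, ⟨hw, hwu⟩⟩ := SimpleGraph.Subgraph.isPerfectMatching_iff.mp hM v
  refine ⟨w, fun e => ?_⟩
  constructor
  · rintro ⟨hv, he⟩
    induction e using Sym2.ind with
    | _ a b =>
      rw [SimpleGraph.Subgraph.mem_edgeSet] at he
      rcases Sym2.mem_iff.mp hv with rfl | rfl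
      · rw [hwu b he]
      · rw [Sym2.eq_swap, hwu a he.symm]
  · rintro rfl
    exact ⟨Sym2.mem_mk_left v w, SimpleGraph.Subgraph.mem_edgeSet.mpr hw⟩

lemma ind_sum (M : (gridGraph m n).Subgraph) (hM : M.IsPerfectMatching) (v : Fin n × Fin m) :
    ∑ e ∈ Finset.univ.filter (fun e : Sym2 (Fin n × Fin m) => v ∈ e),
      Set.indicator M.edgeSet (fun _ => (1 : ℕ)) e = 1 := by
  classical
  obtain ⟨w, hw⟩ := matching_filter M hM v
  rw [← Finset.sum_filter_add_sum_filter_not _ (fun e => e ∈ M.edgeSet)]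
  have hfil : (Finset.univ.filter (fun e : Sym2 (Fin n × Fin m) => v ∈ e)).filter
      (fun e => e ∈ M.edgeSet) = {s(v, w)} := by
    ext e
    simp only [Finset.mem_filter, Finset.mem_univ, true_and, Finset.mem_singleton]
    exact hw e
  have hvw : s(v, w) ∈ M.edgeSet := ((hw s(v, w)).mpr rfl).2
  rw [hfil]
  have h2 : ∀ e ∈ (Finset.univ.filter (fun e : Sym2 (Fin n × Fin m) => v ∈ e)).filter
      (fun e => ¬ e ∈ M.edgeSet), Set.indicator M.edgeSet (fun _ => (1 : ℕ)) e = 0 := by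
    intro e he
    rw [Finset.mem_filter] at he
    rw [Set.indicator_of_notMem he.2]
  rw [Finset.sum_congr rfl h2, Finset.sum_singleton, Set.indicator_of_mem hvw]
  simp

end MagicAux

namespace MagicAux

variable {m n t : ℕ} {x : Sym2 (Fin n × Fin m) → ℕ}

lemma step (hx : IsMagicLabelling (gridGraph m n) x (t+1)) :
    ∃ (M : (gridGraph m n).Subgraph),
      M.IsPerfectMatching ∧
      IsMagicLabelling (gridGraph m n)
        (fun e => x e - Set.indicator M.edgeSet (fun _ => 1) e) t ∧
      ∀ e, Set.indicator M.edgeSet (fun _ => (1:ℕ)) e ≤ x e := by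
  classical
  obtain ⟨M, hM, hMe⟩ := exists_pm hx
  have hle : ∀ e, Set.indicator M.edgeSet (fun _ => (1:ℕ)) e ≤ x e := by
    intro e
    by_cases h : e ∈ M.edgeSet
    · rw [Set.indicator_of_mem h]
      exact Nat.one_le_iff_ne_zero.mpr (hMe e h)
    · rw [Set.indicator_of_notMem h]
      exact Nat.zero_le _
  refine ⟨M, hM, ⟨?_, ?_⟩, hle⟩
  · intro e he
    have h1 : x e = 0 := hx.1 e he
    have h2 : e ∉ M.edgeSet := fun h => he (M.edgeSet_subset h)
    simp [h1, Set.indicator_of_notMem h2]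
  · intro v
    rw [Finset.sum_tsub_distrib _ (fun e _ => hle e), hx.2 v, ind_sum M hM v]
    omega

lemma aux : ∀ (t : ℕ) (x : Sym2 (Fin n × Fin m) → ℕ),
    IsMagicLabelling (gridGraph m n) x t →
    ∃ M : Fin t → (gridGraph m n).Subgraph,
      (∀ i, (M i).IsPerfectMatching) ∧
      ∀ e, x e = ∑ i : Fin t, Set.indicator (M i).edgeSet (fun _ => 1) e := by
  intro t
  induction t with
  | zero =>
    intro x hx
    refine ⟨fun i => i.elim0, fun i => i.elim0, fun e => ?_⟩
    rw [Finset.univ_eq_empty, Finset.sum_empty]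
    by_cases h : e ∈ (gridGraph m n).edgeSet
    · induction e using Sym2.ind with
      | _ u v =>
        have h0 := hx.2 u
        have hmem : s(u,v) ∈ Finset.univ.filter (fun e : Sym2 (Fin n × Fin m) => u ∈ e) := by
          simp
        exact Finset.sum_eq_zero_iff.mp h0 _ hmem
    · exact hx.1 e h
  | succ t ih =>
    intro x hx
    obtain ⟨M0, hM0, hx', hle⟩ := step hx
    obtain ⟨M', hM', hsum⟩ := ih _ hx'
    refine ⟨Fin.cons M0 M', ?_, ?_⟩
    · intro i
      refine Fin.cases ?_ ?_ i
      · exact hM0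
      · intro j; exact hM' j
    · intro e
      rw [Fin.sum_univ_succ]
      simp only [Fin.cons_zero, Fin.cons_succ]
      have := hsum e
      simp only at this
      rw [← this]
      exact (Nat.add_sub_cancel' (hle e)).symm

end MagicAux

/-- Every magic labelling of sum `t` of the grid graph `G(m,n)` is
the sum of the incidence vectors of `t` perfect matchings of `G(m,n)`. -/
theorem magic_labelling_is_domino_stacking (m n t : ℕ) (hm : 0 < m) (hn : 0 < n)
    (ht : 0 < t) (x : Sym2 (Fin n × Fin m) → ℕ)
    (hx : IsMagicLabelling (gridGraph m n) x t) :
    ∃ M : Fin t → (gridGraph m n).Subgraph,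
      (∀ i, (M i).IsPerfectMatching) ∧
      ∀ e, x e = ∑ i : Fin t, Set.indicator (M i).edgeSet (fun _ => 1) e := by
  exact MagicAux.aux t x hx
end

section
/- For all positive integers m, n with mn even and all positive integers t, the number of lattice points in the dilate tP(m,n) of the perfect matching polytope P(m,n) of the grid graph G(m,n) equals T(m,n,t), the number of magic labellings of sum t of G(m,n). -/
open Finset Pointwise

section Aux

open SimpleGraph

/-- Sum over edges incident to `v` equals sum over the other endpoint. -/
theorem sum_incident {α : Type*} [Fintype α] [DecidableEq α] (v : α) {M : Type*}
    [AddCommMonoid M] (g : Sym2 α → M) :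
    ∑ e ∈ Finset.univ.filter (fun e : Sym2 α => v ∈ e), g e = ∑ w : α, g s(v, w) := by
  refine Finset.sum_bij' (fun e he => Sym2.Mem.other' (Finset.mem_filter.mp he).2)
    (fun w _ => s(v, w)) ?_ ?_ ?_ ?_ ?_
  · intro a ha; exact Finset.mem_univ _
  · intro a ha; simp
  · intro a ha; exact Sym2.other_spec' _
  · intro a ha; exact Sym2.congr_right.mp (Sym2.other_spec' _)
  · intro a ha; rw [Sym2.other_spec']

theorem sum_ite_unique {α : Type*} [Fintype α] {P : α → Prop} [DecidablePred P]
    (h : ∃! w, P w) {R : Type*} [AddCommMonoidWithOne R] :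
    ∑ w : α, (if P w then (1 : R) else 0) = 1 := by
  obtain ⟨w₀, hw₀, huniq⟩ := h
  rw [Finset.sum_eq_single_of_mem w₀ (Finset.mem_univ _)]
  · simp [hw₀]
  · intro b _ hb
    simp only [ite_eq_right_iff]
    intro hPb; exact absurd (huniq b hPb) hb

/-- The fractional perfect-matching polytope conditions with level `t`. -/
def magicSet {α : Type*} [Fintype α] (G : SimpleGraph α) (t : ℝ) : Set (Sym2 α → ℝ) :=
  {y | (∀ e ∉ G.edgeSet, y e = 0) ∧ (∀ e, 0 ≤ y e) ∧ ∀ v, ∑ w : α, y s(v, w) = t}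

theorem pm_existsUnique {α : Type*} {G : SimpleGraph α} {M : G.Subgraph}
    (hM : M.IsPerfectMatching) (v : α) : ∃! w, M.Adj v w :=
  hM.1 (hM.2 v)

theorem pmPolytope_subset_magicSet {α : Type*} [Fintype α] (G : SimpleGraph α) :
    pmPolytope G ⊆ magicSet G 1 := by
  classical
  apply convexHull_min
  · rintro y ⟨M, hM, rfl⟩
    refine ⟨?_, ?_, ?_⟩
    · intro e he
      exact Set.indicator_of_notMem (fun hmem => he (M.edgeSet_subset hmem)) _
    · intro e
      rw [Set.indicator_apply]
      split <;> simp
    · intro v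
      have h1 : ∀ w : α, Set.indicator M.edgeSet (1 : Sym2 α → ℝ) s(v, w)
          = if M.Adj v w then (1 : ℝ) else 0 := by
        intro w
        rw [Set.indicator_apply]
        simp [Subgraph.mem_edgeSet]
      rw [Finset.sum_congr rfl fun w _ => h1 w]
      exact sum_ite_unique (pm_existsUnique hM v)
  · rintro y hy z hz a b ha hb hab
    obtain ⟨hy0, hy1, hy2⟩ := hy
    obtain ⟨hz0, hz1, hz2⟩ := hz
    refine ⟨?_, ?_, ?_⟩
    · intro e he
      simp [hy0 e he, hz0 e he]
    · intro e
      have := hy1 e; have := hz1 e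
      simp only [Pi.add_apply, Pi.smul_apply, smul_eq_mul]
      positivity
    · intro v
      simp only [Pi.add_apply, Pi.smul_apply, smul_eq_mul]
      rw [Finset.sum_add_distrib, ← Finset.mul_sum, ← Finset.mul_sum, hy2 v, hz2 v]
      simp [hab]

/-- Parity of a grid vertex. -/
def par {m n : ℕ} (v : Fin n × Fin m) : ℕ := (v.1.1 + v.2.1) % 2

theorem grid_adj_par {m n : ℕ} {v w : Fin n × Fin m} (h : (gridGraph m n).Adj v w) :
    par v + par w = 1 := by
  have h' : Nat.dist v.1.1 w.1.1 + Nat.dist v.2.1 w.2.1 = 1 := h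
  simp only [Nat.dist] at h'
  unfold par
  omega

/-- Every magic labelling with positive sum has a perfect matching in its support. -/
theorem exists_pm_support {m n : ℕ} (x : Sym2 (Fin n × Fin m) → ℕ) {t : ℕ}
    (hx : IsMagicLabelling (gridGraph m n) x t) (ht : 0 < t) :
    ∃ M : (gridGraph m n).Subgraph, M.IsPerfectMatching ∧
      ∀ v w, M.Adj v w → 1 ≤ x s(v, w) := by
  classical
  have hsum : ∀ v : Fin n × Fin m, ∑ w : Fin n × Fin m, x s(v, w) = t := by
    intro v
    rw [← sum_incident v x]
    exact hx.2 v
  have hxadj : ∀ v w : Fin n × Fin m, 0 < x s(v, w) → (gridGraph m n).Adj v w := by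
    intro v w h
    by_contra hadj
    have := hx.1 s(v, w) (by simpa [SimpleGraph.mem_edgeSet] using hadj)
    omega
  have hxswap : ∀ v w : Fin n × Fin m, x s(v, w) = x s(w, v) := fun v w => by rw [Sym2.eq_swap]
  -- x vanishes on same-parity pairs
  have hxpar : ∀ v w : Fin n × Fin m, par v = par w → x s(v, w) = 0 := by
    intro v w hpar
    by_contra h
    have := grid_adj_par (hxadj v w (Nat.pos_of_ne_zero h))
    omega
  set A := {v : Fin n × Fin m // par v = 0}
  set tt : A → Finset (Fin n × Fin m) := fun a => Finset.univ.filter (fun w => 0 < x s(a.1, w)) with htt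
  -- Hall's condition
  have hHall : ∀ S : Finset A, S.card ≤ (S.biUnion tt).card := by
    intro S
    set N := S.biUnion tt with hN
    have key : t * S.card ≤ t * N.card := by
      calc t * S.card = ∑ a ∈ S, t := by rw [Finset.sum_const, smul_eq_mul, mul_comm]
        _ = ∑ a ∈ S, ∑ w : Fin n × Fin m, x s(a.1, w) := by
            exact Finset.sum_congr rfl fun a _ => (hsum a.1).symm
        _ = ∑ a ∈ S, ∑ w ∈ N, x s(a.1, w) := by
            refine Finset.sum_congr rfl fun a ha => ?_
            refine (Finset.sum_subset (Finset.subset_univ N) ?_).symm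
            intro w _ hw
            by_contra h
            exact hw (Finset.mem_biUnion.mpr ⟨a, ha,
              Finset.mem_filter.mpr ⟨Finset.mem_univ _, Nat.pos_of_ne_zero h⟩⟩)
        _ = ∑ w ∈ N, ∑ a ∈ S, x s(a.1, w) := Finset.sum_comm
        _ ≤ ∑ w ∈ N, t := by
            refine Finset.sum_le_sum fun w _ => ?_
            calc ∑ a ∈ S, x s(a.1, w) = ∑ u ∈ S.image Subtype.val, x s(u, w) := by
                  rw [Finset.sum_image]
                  intro a _ b _ hab
                  exact Subtype.ext hab
              _ ≤ ∑ u : Fin n × Fin m, x s(u, w) :=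
                  Finset.sum_le_sum_of_subset (Finset.subset_univ _)
              _ = ∑ u : Fin n × Fin m, x s(w, u) := Finset.sum_congr rfl fun u _ => by rw [Sym2.eq_swap]
              _ = t := hsum w
        _ = t * N.card := by rw [Finset.sum_const, smul_eq_mul, mul_comm]
    exact Nat.le_of_mul_le_mul_left key ht
  obtain ⟨f, hfinj, hfmem⟩ := (Finset.all_card_le_biUnion_card_iff_exists_injective tt).mp hHall
  have hfpos : ∀ a : A, 0 < x s(a.1, f a) := by
    intro a
    exact (Finset.mem_filter.mp (hfmem a)).2
  have hfadj : ∀ a : A, (gridGraph m n).Adj a.1 (f a) := fun a => hxadj _ _ (hfpos a)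
  have hfpar : ∀ a : A, par (f a) = 1 := by
    intro a
    have := grid_adj_par (hfadj a)
    have := a.2
    omega
  set B := {v : Fin n × Fin m // par v = 1}
  set g : A → B := fun a => ⟨f a, hfpar a⟩ with hg
  have hginj : Function.Injective g := by
    intro a b hab
    exact hfinj (congrArg Subtype.val hab)
  -- card A = card B
  have hcard : Fintype.card A = Fintype.card B := by
    have h0 : t * Fintype.card A = t * Fintype.card B := by
      have hA : t * Fintype.card A
          = ∑ a ∈ Finset.univ.filter (fun v : Fin n × Fin m => par v = 0),
              ∑ b ∈ Finset.univ.filter (fun v : Fin n × Fin m => par v = 1), x s(a, b) := by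
        rw [Fintype.card_subtype]
        calc t * (Finset.univ.filter (fun v : Fin n × Fin m => par v = 0)).card
            = ∑ a ∈ Finset.univ.filter (fun v : Fin n × Fin m => par v = 0), t := by
              rw [Finset.sum_const, smul_eq_mul, mul_comm]
          _ = _ := by
              refine Finset.sum_congr rfl fun a ha => ?_
              have hpa : par a = 0 := (Finset.mem_filter.mp ha).2
              rw [← hsum a]
              refine (Finset.sum_subset (Finset.subset_univ _) ?_).symm
              intro w _ hw
              have : par w ≠ 1 := by
                intro h1
                exact hw (Finset.mem_filter.mpr ⟨Finset.mem_univ _, h1⟩)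
              have hpw : par w = 0 := by unfold par at *; omega
              exact hxpar a w (by omega)
      have hB : t * Fintype.card B
          = ∑ b ∈ Finset.univ.filter (fun v : Fin n × Fin m => par v = 1),
              ∑ a ∈ Finset.univ.filter (fun v : Fin n × Fin m => par v = 0), x s(b, a) := by
        rw [Fintype.card_subtype]
        calc t * (Finset.univ.filter (fun v : Fin n × Fin m => par v = 1)).card
            = ∑ b ∈ Finset.univ.filter (fun v : Fin n × Fin m => par v = 1), t := by
              rw [Finset.sum_const, smul_eq_mul, mul_comm]
          _ = _ := by
              refine Finset.sum_congr rfl fun b hb => ?_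
              have hpb : par b = 1 := (Finset.mem_filter.mp hb).2
              rw [← hsum b]
              refine (Finset.sum_subset (Finset.subset_univ _) ?_).symm
              intro w _ hw
              have : par w ≠ 0 := by
                intro h1
                exact hw (Finset.mem_filter.mpr ⟨Finset.mem_univ _, h1⟩)
              have hpw : par w = 1 := by unfold par at *; omega
              exact hxpar b w (by omega)
      rw [hA, hB, Finset.sum_comm]
      exact Finset.sum_congr rfl fun a _ => Finset.sum_congr rfl fun b _ => by
        rw [Sym2.eq_swap]
    exact Nat.eq_of_mul_eq_mul_left ht h0
  have hgbij : Function.Bijective g :=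
    (Fintype.bijective_iff_injective_and_card g).mpr ⟨hginj, hcard⟩
  -- build the matching
  refine ⟨⟨Set.univ,
    fun v w => (∃ h : par v = 0, f ⟨v, h⟩ = w) ∨ (∃ h : par w = 0, f ⟨w, h⟩ = v),
    ?_, fun _ => trivial, ?_⟩, ⟨?_, fun _ => trivial⟩, ?_⟩
  · rintro v w (⟨h, rfl⟩ | ⟨h, rfl⟩)
    · exact hfadj ⟨v, h⟩
    · exact (hfadj ⟨w, h⟩).symm
  · constructor
    intro v w h
    exact h.symm
  · intro v _
    rcases Nat.mod_two_eq_zero_or_one (v.1.1 + v.2.1) with h0 | h1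
    · refine ⟨f ⟨v, h0⟩, Or.inl ⟨h0, rfl⟩, ?_⟩
      rintro w (⟨h, rfl⟩ | ⟨h, hfw⟩)
      · rfl
      · exfalso
        have := hfpar ⟨w, h⟩
        rw [hfw] at this
        exact absurd h0 (by unfold par at *; omega)
    · obtain ⟨a, ha⟩ := hgbij.2 ⟨v, h1⟩
      have hfa : f a = v := congrArg Subtype.val ha
      refine ⟨a.1, Or.inr ⟨a.2, by simpa using hfa⟩, ?_⟩
      rintro w (⟨h, rfl⟩ | ⟨h, hfw⟩)
      · exact absurd h (by unfold par at *; omega)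
      · have : g ⟨w, h⟩ = ⟨v, h1⟩ := Subtype.ext hfw
        have := hginj (this.trans ha.symm)
        exact (congrArg Subtype.val this : w = a.1)
  · rintro v w (⟨h, rfl⟩ | ⟨h, rfl⟩)
    · exact hfpos ⟨v, h⟩
    · rw [Sym2.eq_swap]
      exact hfpos ⟨w, h⟩

/-- Magic labellings give lattice points of the dilated polytope. -/
theorem magic_mem {m n : ℕ} : ∀ t : ℕ, 0 < t → ∀ x : Sym2 (Fin n × Fin m) → ℕ,
    IsMagicLabelling (gridGraph m n) x t →
    (fun e => (x e : ℝ)) ∈ (t : ℝ) • pmPolytope (gridGraph m n) := by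
  classical
  intro t
  induction t with
  | zero => omega
  | succ t ih =>
    intro _ x hx
    obtain ⟨M, hM, hMx⟩ := exists_pm_support x hx (Nat.succ_pos t)
    set ind : Sym2 (Fin n × Fin m) → ℕ := fun e => if e ∈ M.edgeSet then 1 else 0 with hind
    set x' : Sym2 (Fin n × Fin m) → ℕ := fun e => x e - ind e with hx'
    have hle : ∀ e, ind e ≤ x e := by
      intro e
      induction e using Sym2.ind with
      | _ v w =>
        simp only [hind]
        split
        · next hmem => exact hMx v w (SimpleGraph.Subgraph.mem_edgeSet.mp hmem)
        · exact Nat.zero_le _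
    have hxe : ∀ e, x e = ind e + x' e := by
      intro e
      have := hle e
      simp only [hx']
      omega
    have hindsum : ∀ v, ∑ w, ind s(v, w) = 1 := by
      intro v
      have h1 : ∀ w, ind s(v, w) = if M.Adj v w then 1 else 0 := by
        intro w
        simp [hind, SimpleGraph.Subgraph.mem_edgeSet]
      rw [Finset.sum_congr rfl fun w _ => h1 w]
      exact sum_ite_unique (pm_existsUnique hM v)
    have hxsum : ∀ v, ∑ w, x s(v, w) = t + 1 := by
      intro v
      rw [← sum_incident v x]
      exact hx.2 v
    have hx'sum : ∀ v, ∑ w, x' s(v, w) = t := by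
      intro v
      have := hxsum v
      rw [Finset.sum_congr rfl fun w _ => hxe s(v, w), Finset.sum_add_distrib,
        hindsum v] at this
      omega
    have hx'magic : IsMagicLabelling (gridGraph m n) x' t := by
      constructor
      · intro e he
        have h0 : x e = 0 := hx.1 e he
        simp only [hx']
        omega
      · intro v
        rw [sum_incident v x']
        exact hx'sum v
    have hchi : Set.indicator M.edgeSet (1 : Sym2 (Fin n × Fin m) → ℝ)
        ∈ pmPolytope (gridGraph m n) :=
      subset_convexHull ℝ _ ⟨M, hM, rfl⟩
    have hchind : ∀ e, Set.indicator M.edgeSet (1 : Sym2 (Fin n × Fin m) → ℝ) e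
        = (ind e : ℝ) := by
      intro e
      rw [Set.indicator_apply]
      simp only [hind]
      split <;> simp
    rcases Nat.eq_zero_or_pos t with ht0 | htpos
    · -- t = 0 : x' = 0 and x = indicator
      subst ht0
      have hx'0 : ∀ e, x' e = 0 := by
        intro e
        induction e using Sym2.ind with
        | _ v w =>
          have h := hx'sum v
          have hle' : x' s(v, w) ≤ ∑ u, x' s(v, u) :=
            Finset.single_le_sum (f := fun u => x' s(v, u)) (fun u _ => Nat.zero_le _)
              (Finset.mem_univ w)
          omega
      have : (fun e => (x e : ℝ)) = Set.indicator M.edgeSet 1 := by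
        funext e
        rw [hchind e, hxe e, hx'0 e]
        push_cast
        ring
      rw [this]
      have h1 : ((0 + 1 : ℕ) : ℝ) = (1 : ℝ) := by norm_num
      rw [h1, one_smul]
      exact hchi
    · have hmem' := ih htpos x' hx'magic
      have hconv : Convex ℝ (pmPolytope (gridGraph m n)) := by
        unfold pmPolytope; exact convex_convexHull ℝ _
      have hsplit : ((1:ℝ) + (t:ℝ)) • pmPolytope (gridGraph m n)
          = (1:ℝ) • pmPolytope (gridGraph m n) + (t:ℝ) • pmPolytope (gridGraph m n) :=
        hconv.add_smul zero_le_one (by positivity)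
      have hcast : ((t + 1 : ℕ) : ℝ) = (1 : ℝ) + (t : ℝ) := by push_cast; ring
      rw [hcast, hsplit]
      refine Set.mem_add.mpr ⟨Set.indicator M.edgeSet 1, ?_, fun e => (x' e : ℝ), hmem', ?_⟩
      · rw [one_smul]; exact hchi
      · funext e
        simp only [Pi.add_apply]
        rw [hchind e, hxe e]
        push_cast
        ring

end Aux

/-- For `m, n ≥ 1` with `mn` even and `t ≥ 1`, the number of lattice
points of the dilate `t P(m,n)` equals `T(m,n,t)`, the number of magic labellings of
sum `t` of `G(m,n)`. -/
theorem lattice_points_eq_magic_labellings (m n t : ℕ) (hm : 0 < m) (hn : 0 < n)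
    (heven : Even (m * n)) (ht : 0 < t) :
    latticeCount (pmPolytope (gridGraph m n)) t = T m n t := by
  classical
  unfold latticeCount T
  apply Nat.card_congr
  have hfwd : ∀ y : Sym2 (Fin n × Fin m) → ℤ,
      (fun e => (y e : ℝ)) ∈ (t : ℝ) • pmPolytope (gridGraph m n) →
      (∀ e, 0 ≤ y e) ∧ IsMagicLabelling (gridGraph m n) (fun e => (y e).toNat) t := by
    intro y hy
    obtain ⟨z, hz, hyz⟩ := hy
    have hzQ := pmPolytope_subset_magicSet (gridGraph m n) hz
    obtain ⟨hz0, hz1, hz2⟩ := hzQ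
    have hyr : ∀ e, (y e : ℝ) = t * z e := by
      intro e
      have := congrFun hyz e
      simpa [smul_eq_mul] using this.symm
    have hynn : ∀ e, 0 ≤ y e := by
      intro e
      have : (0 : ℝ) ≤ (y e : ℝ) := by
        rw [hyr e]
        exact mul_nonneg (by positivity) (hz1 e)
      exact_mod_cast this
    refine ⟨hynn, ?_, ?_⟩
    · intro e he
      have : (y e : ℝ) = 0 := by rw [hyr e, hz0 e he, mul_zero]
      have hy0 : y e = 0 := by exact_mod_cast this
      simp [hy0]
    · intro v
      rw [sum_incident v (fun e => (y e).toNat)]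
      have hzr : ∑ w, ((y s(v, w) : ℝ)) = t := by
        rw [Finset.sum_congr rfl fun w _ => hyr s(v, w), ← Finset.mul_sum, hz2 v, mul_one]
      have hzint : ∑ w, y s(v, w) = (t : ℤ) := by exact_mod_cast hzr
      have : ((∑ w, (y s(v, w)).toNat : ℕ) : ℤ) = (t : ℤ) := by
        push_cast
        rw [Finset.sum_congr rfl fun w _ => Int.toNat_of_nonneg (hynn s(v, w))]
        exact hzint
      exact_mod_cast this
  refine ⟨fun p => ⟨fun e => (p.1 e).toNat, (hfwd p.1 p.2).2⟩,
    fun q => ⟨fun e => (q.1 e : ℤ), ?_⟩, ?_, ?_⟩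
  · have hmm := magic_mem t ht q.1 q.2
    have h2 : (fun e => ((q.1 e : ℤ) : ℝ)) = fun e => ((q.1 e : ℕ) : ℝ) := by
      funext e; push_cast; ring
    rw [h2]
    exact hmm
  · intro p
    refine Subtype.ext (funext fun e => ?_)
    exact Int.toNat_of_nonneg ((hfwd p.1 p.2).1 e)
  · intro q
    refine Subtype.ext (funext fun e => ?_)
    exact Int.toNat_natCast _
end
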